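/- arXiv:2409.04237 — 13 statements merged into one kernel-verified Lean document; each statement's English description precedes it below -/
import Mathlib

section
/- Let X be a normed space, S a dense subset of X, and T : S → S a bijection such that there exists m₀ ∈ ℕ so that for all m ≥ m₀ and all x, y ∈ S, ‖x - y‖ < m iff ‖T x - T y‖ < m. Then for all x, y ∈ S and every k ∈ ℕ, ‖x - y‖ ≤ k iff ‖T x - T y‖ ≤ k. -/
theorem aux_step_iso {X : Type*} [NormedAddCommGroup X] [NormedSpace ℝ X]
    (S : Set X) (hS : Dense S) (T : S → S) (m₀ : ℕ)
    (hT : ∀ m : ℕ, m₀ ≤ m → ∀ x y : S,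
      ‖(x : X) - (y : X)‖ < (m : ℝ) ↔ ‖(T x : X) - (T y : X)‖ < (m : ℝ)) :
    ∀ x y : S, ∀ k : ℕ,
      ‖(T x : X) - (T y : X)‖ ≤ (k : ℝ) → ‖(x : X) - (y : X)‖ ≤ (k : ℝ) := by
  intro x y k hk
  by_contra h
  push_neg at h
  set d : ℝ := ‖(x : X) - (y : X)‖ with hd
  have hd0 : 0 < d := lt_of_le_of_lt (Nat.cast_nonneg k) h
  have hne : (x : X) - (y : X) ≠ 0 := by
    intro h0; rw [hd, h0, norm_zero] at hd0; exact lt_irrefl _ hd0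
  set δ : ℝ := d - k with hδ
  have hδ0 : 0 < δ := by rw [hδ]; linarith
  set n : ℕ := max m₀ ⌈d⌉₊ with hn
  have hn1 : m₀ ≤ n := le_max_left _ _
  have hnd : d ≤ (n : ℝ) := by
    calc d ≤ (⌈d⌉₊ : ℝ) := Nat.le_ceil d
    _ ≤ (n : ℝ) := by exact_mod_cast le_max_right m₀ ⌈d⌉₊
  set m : ℕ := n + k with hm
  have hm0 : m₀ ≤ m := le_trans hn1 (Nat.le_add_right _ _)
  have hmr : (m : ℝ) = (n : ℝ) + (k : ℝ) := by push_cast [hm]; ring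
  set u : X := d⁻¹ • ((x : X) - (y : X)) with hu
  have hu1 : ‖u‖ = 1 := norm_smul_inv_norm hne
  have hxy : (x : X) - (y : X) = d • u := (smul_inv_smul₀ hd0.ne' _).symm
  set c : ℝ := (m : ℝ) + δ / 4 with hc
  set p : X := (y : X) + c • u with hp
  obtain ⟨z0, hz0S, hz0⟩ := hS.exists_dist_lt p (by linarith : (0 : ℝ) < δ / 4)
  set z : S := ⟨z0, hz0S⟩ with hz
  have hzp : ‖(z : X) - p‖ < δ / 4 := by
    rw [← dist_eq_norm, dist_comm]; exact hz0
  have hcd : d ≤ c := by rw [hc, hmr]; linarith [Nat.cast_nonneg (α := ℝ) k]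
  have hpx : ‖p - (x : X)‖ = c - d := by
    have hpe : p - (x : X) = (c - d) • u := by
      rw [sub_smul, ← hxy, hp]; abel
    rw [hpe, norm_smul, hu1, mul_one, Real.norm_eq_abs, abs_of_nonneg (by linarith)]
  have hpy : ‖p - (y : X)‖ = c := by
    have hpe : p - (y : X) = c • u := by rw [hp]; abel
    rw [hpe, norm_smul, hu1, mul_one, Real.norm_eq_abs, abs_of_nonneg (by linarith)]
  have h1 : ‖(z : X) - (x : X)‖ < (n : ℝ) := by
    have htri : ‖(z : X) - (x : X)‖ ≤ ‖(z : X) - p‖ + ‖p - (x : X)‖ := by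
      simpa [dist_eq_norm] using dist_triangle (z : X) p (x : X)
    rw [hpx] at htri
    rw [hδ] at hδ0
    rw [hδ] at hzp
    have hcd' : c - d = (n : ℝ) + (k : ℝ) + δ / 4 - d := by rw [hc, hmr]
    rw [hδ] at hcd'
    clear_value d δ n m u c p z
    linarith
  have h2 : (m : ℝ) ≤ ‖(z : X) - (y : X)‖ := by
    have htri : ‖p - (y : X)‖ ≤ ‖p - (z : X)‖ + ‖(z : X) - (y : X)‖ := by
      simpa [dist_eq_norm] using dist_triangle p (z : X) (y : X)
    rw [hpy] at htri
    have hpz : ‖p - (z : X)‖ = ‖(z : X) - p‖ := by rw [norm_sub_rev]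
    rw [hpz] at htri
    rw [hc] at htri
    linarith
  have hA : ‖(T z : X) - (T x : X)‖ < (n : ℝ) := (hT n hn1 z x).mp h1
  have hB : (m : ℝ) ≤ ‖(T z : X) - (T y : X)‖ := by
    by_contra hc'
    push_neg at hc'
    exact absurd ((hT m hm0 z y).mpr hc') (not_lt.mpr h2)
  have htri : ‖(T z : X) - (T y : X)‖ ≤ ‖(T z : X) - (T x : X)‖ + ‖(T x : X) - (T y : X)‖ := by
    simpa [dist_eq_norm] using dist_triangle (T z : X) (T x : X) (T y : X)
  rw [hmr] at hB
  linarith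

theorem stmt_0 {X : Type*} [NormedAddCommGroup X] [NormedSpace ℝ X]
    (S : Set X) (hS : Dense S) (T : S → S) (hbij : Function.Bijective T)
    (m₀ : ℕ)
    (hT : ∀ m : ℕ, m₀ ≤ m → ∀ x y : S,
      ‖(x : X) - (y : X)‖ < (m : ℝ) ↔ ‖(T x : X) - (T y : X)‖ < (m : ℝ)) :
    ∀ x y : S, ∀ k : ℕ,
      ‖(x : X) - (y : X)‖ ≤ (k : ℝ) ↔ ‖(T x : X) - (T y : X)‖ ≤ (k : ℝ) := by
  intro x y k
  constructor
  · intro h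
    set e : S ≃ S := Equiv.ofBijective T hbij with he
    have hT' : ∀ m : ℕ, m₀ ≤ m → ∀ a b : S,
        ‖(a : X) - (b : X)‖ < (m : ℝ) ↔ ‖(e.symm a : X) - (e.symm b : X)‖ < (m : ℝ) := by
      intro m hm a b
      have key := hT m hm (e.symm a) (e.symm b)
      have ha : T (e.symm a) = a := e.apply_symm_apply a
      have hb : T (e.symm b) = b := e.apply_symm_apply b
      rw [ha, hb] at key
      exact key.symm
    have := aux_step_iso S hS e.symm m₀ hT' (T x) (T y) k
    have hx : e.symm (T x) = x := e.symm_apply_apply x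
    have hy : e.symm (T y) = y := e.symm_apply_apply y
    rw [hx, hy] at this
    exact this h
  · exact aux_step_iso S hS T m₀ hT x y k
end

section
/- Let X be a real normed vector space and T : X → X a bijection such that for some m₀ ∈ ℕ, for all m ≥ m₀ and all x, y ∈ X, ‖x - y‖ < m iff ‖T x - T y‖ < m. Then T is a step-isometry: for all x, y ∈ X and all k ∈ ℕ, ‖x - y‖ < k iff ‖T x - T y‖ < k (equivalently ⌊‖x - y‖⌋ = ⌊‖T x - T y‖⌋). -/
private lemma aux_char_le {X : Type*} [NormedAddCommGroup X] [NormedSpace ℝ X]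
    (m k : ℝ) (hm : 1 ≤ m) (hk : 0 ≤ k) (x y : X) :
    ‖x - y‖ ≤ k ↔ ∀ z : X, ‖y - z‖ < m → ‖x - z‖ < m + k := by
  constructor
  · intro h z hz
    have h3 : ‖x - z‖ ≤ ‖x - y‖ + ‖y - z‖ := norm_sub_le_norm_sub_add_norm_sub x y z
    linarith
  · intro h
    by_contra hd
    push_neg at hd
    set d := ‖x - y‖ with hdd
    have hd0 : 0 < d := lt_of_le_of_lt hk hd
    set t : ℝ := if m + k ≤ d then 0 else (m + k - d + m) / 2 with ht
    have ht0 : 0 ≤ t := by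
      rw [ht]; split_ifs with h1
      · exact le_refl 0
      · push_neg at h1; linarith
    have htm : t < m := by
      rw [ht]; split_ifs with h1
      · linarith
      · push_neg at h1; linarith
    have hdt : m + k ≤ d + t := by
      rw [ht]; split_ifs with h1
      · linarith
      · push_neg at h1; linarith
    set z : X := y - (t / d) • (x - y) with hz
    have hne : d ≠ 0 := ne_of_gt hd0
    have hyz : ‖y - z‖ = t := by
      rw [hz]
      have : y - (y - (t / d) • (x - y)) = (t / d) • (x - y) := by abel
      rw [this, norm_smul, Real.norm_eq_abs, abs_of_nonneg (by positivity), ← hdd,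
        div_mul_cancel₀ _ hne]
    have hxz : ‖x - z‖ = d + t := by
      rw [hz]
      have : x - (y - (t / d) • (x - y)) = (1 + t / d) • (x - y) := by
        rw [add_smul, one_smul, smul_sub]; abel
      rw [this, norm_smul, Real.norm_eq_abs, ← hdd,
        abs_of_nonneg (by positivity), add_mul, one_mul, div_mul_cancel₀ _ hne]
    have := h z (by rw [hyz]; exact htm)
    rw [hxz] at this
    linarith

private lemma aux_char_lt {X : Type*} [NormedAddCommGroup X] [NormedSpace ℝ X]
    (m k : ℝ) (hm : 1 ≤ m) (hk : 1 ≤ k) (x y : X) :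
    ‖x - y‖ < k ↔ ∀ z : X, ‖x - z‖ ≤ m → ‖y - z‖ < m + k := by
  constructor
  · intro h z hz
    have h3 : ‖y - z‖ ≤ ‖y - x‖ + ‖x - z‖ := norm_sub_le_norm_sub_add_norm_sub y x z
    rw [norm_sub_rev y x] at h3
    linarith
  · intro h
    by_contra hd
    push_neg at hd
    set d := ‖x - y‖ with hdd
    have hd0 : 0 < d := lt_of_lt_of_le (by linarith) hd
    have hne : d ≠ 0 := ne_of_gt hd0
    set z : X := x + (m / d) • (x - y) with hz
    have hxz : ‖x - z‖ = m := by
      rw [hz]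
      have : x - (x + (m / d) • (x - y)) = (-(m / d)) • (x - y) := by
        rw [neg_smul]; abel
      rw [this, norm_smul, Real.norm_eq_abs, ← hdd, abs_neg,
        abs_of_nonneg (by positivity), div_mul_cancel₀ _ hne]
    have hyz : ‖y - z‖ = d + m := by
      rw [hz]
      have : y - (x + (m / d) • (x - y)) = (-(1 + m / d)) • (x - y) := by
        rw [neg_smul, add_smul, one_smul, smul_sub]; abel
      rw [this, norm_smul, Real.norm_eq_abs, ← hdd, abs_neg,
        abs_of_nonneg (by positivity), add_mul, one_mul, div_mul_cancel₀ _ hne]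
    have := h z (le_of_eq hxz)
    rw [hyz] at this
    linarith

theorem stmt_1 {X : Type*} [NormedAddCommGroup X] [NormedSpace ℝ X]
    (T : X → X) (hbij : Function.Bijective T)
    (m₀ : ℕ)
    (hT : ∀ m : ℕ, m₀ ≤ m → ∀ x y : X,
      ‖x - y‖ < (m : ℝ) ↔ ‖T x - T y‖ < (m : ℝ)) :
    ∀ x y : X, ∀ k : ℕ, ‖x - y‖ < (k : ℝ) ↔ ‖T x - T y‖ < (k : ℝ) := by
  set M : ℕ := max m₀ 1 with hM
  have hMm₀ : m₀ ≤ M := le_max_left _ _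
  have hM1 : (1 : ℝ) ≤ (M : ℝ) := by exact_mod_cast le_max_right m₀ 1
  have hTM : ∀ k : ℕ, ∀ x y : X, ‖x - y‖ < (M : ℝ) + (k : ℝ) ↔
      ‖T x - T y‖ < (M : ℝ) + (k : ℝ) := by
    intro k x y
    have := hT (M + k) (le_trans hMm₀ (Nat.le_add_right _ _)) x y
    push_cast at this
    exact this
  -- Step 1: T preserves ≤ k for every natural k
  have step1 : ∀ k : ℕ, ∀ x y : X, ‖x - y‖ ≤ (k : ℝ) ↔ ‖T x - T y‖ ≤ (k : ℝ) := by
    intro k x y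
    rw [aux_char_le (M : ℝ) (k : ℝ) hM1 (Nat.cast_nonneg k) x y,
      aux_char_le (M : ℝ) (k : ℝ) hM1 (Nat.cast_nonneg k) (T x) (T y)]
    constructor
    · intro h z hz
      obtain ⟨w, rfl⟩ := hbij.surjective z
      exact (hTM k x w).mp (h w ((hT M hMm₀ y w).mpr hz))
    · intro h z hz
      exact (hTM k x z).mpr (h (T z) ((hT M hMm₀ y z).mp hz))
  -- Step 2
  intro x y k
  rcases Nat.eq_zero_or_pos k with rfl | hk
  · simp only [Nat.cast_zero]
    constructor <;> intro h <;> exact absurd h (not_lt.mpr (norm_nonneg _))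
  · have hk1 : (1 : ℝ) ≤ (k : ℝ) := by exact_mod_cast hk
    rw [aux_char_lt (M : ℝ) (k : ℝ) hM1 hk1 x y,
      aux_char_lt (M : ℝ) (k : ℝ) hM1 hk1 (T x) (T y)]
    constructor
    · intro h z hz
      obtain ⟨w, rfl⟩ := hbij.surjective z
      exact (hTM k y w).mp (h w ((step1 M x w).mpr hz))
    · intro h z hz
      exact (hTM k y z).mpr (h (T z) ((step1 M x z).mp hz))
end

section
/- Let X be a normed space, S a dense subset, and T : S → S a bijective step-isometry for large distances such that T and T⁻¹ are both continuous (in the subspace topology). Then T is a step-isometry: for all x, y ∈ S and all k ∈ ℕ, ‖x - y‖ < k iff ‖T x - T y‖ < k. -/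
lemma step_aux_lemA {X : Type*} [NormedAddCommGroup X] [NormedSpace ℝ X]
    (S : Set X) (hS : Dense S) (T T' : S → S)
    (hinv₂ : Function.RightInverse T' T) (m₀ : ℕ)
    (hT : ∀ m : ℕ, m₀ ≤ m → ∀ x y : S,
      ‖(x : X) - (y : X)‖ < (m : ℝ) ↔ ‖(T x : X) - (T y : X)‖ < (m : ℝ))
    (k : ℕ) (x y : S) (h : ‖(x : X) - (y : X)‖ < (k : ℝ)) :
    ‖(T x : X) - (T y : X)‖ ≤ (k : ℝ) := by
  by_contra h'
  push_neg at h'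
  set d' : ℝ := ‖(T x : X) - (T y : X)‖ with hd'
  have hd'pos : 0 < d' := lt_of_le_of_lt (Nat.cast_nonneg k) h'
  set N : ℕ := m₀ + k + 1 with hN
  have hNcast : (N : ℝ) = (m₀ : ℝ) + k + 1 := by push_cast [hN]; ring
  obtain ⟨δ₀, hδ₀pos, hδ₀le1, hδ₀le⟩ :
      ∃ δ₀ : ℝ, 0 < δ₀ ∧ δ₀ ≤ 1 ∧ δ₀ ≤ d' - k :=
    ⟨min (d' - (k : ℝ)) 1, lt_min (by linarith) one_pos, min_le_right _ _, min_le_left _ _⟩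
  set R : ℝ := (N : ℝ) - k - δ₀ / 2 with hR
  have hRpos : 0 < R := by
    have : (0:ℝ) ≤ m₀ := Nat.cast_nonneg m₀
    rw [hR, hNcast]; linarith
  set p : X := (T x : X) + (R / d') • ((T x : X) - (T y : X)) with hp
  have hpTx : ‖p - (T x : X)‖ = R := by
    have he : p - (T x : X) = (R / d') • ((T x : X) - (T y : X)) := by rw [hp]; abel
    rw [he, norm_smul, Real.norm_eq_abs, abs_of_pos (by positivity), ← hd',
      div_mul_cancel₀ _ (ne_of_gt hd'pos)]
  have hpTy : ‖p - (T y : X)‖ = d' + R := by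
    have he : p - (T y : X) = (1 + R / d') • ((T x : X) - (T y : X)) := by
      rw [hp, add_smul, one_smul]; abel
    rw [he, norm_smul, Real.norm_eq_abs, abs_of_pos (by positivity), ← hd']
    field_simp
  obtain ⟨z, hzS, hz⟩ := Metric.mem_closure_iff.mp (hS p) (δ₀ / 4) (by linarith)
  have hzp : ‖z - p‖ < δ₀ / 4 := by rw [← dist_eq_norm, dist_comm]; exact hz
  have hpz : ‖p - z‖ < δ₀ / 4 := by rw [← dist_eq_norm]; exact hz
  set z' : S := ⟨z, hzS⟩ with hz'def
  have hz'co : (z' : X) = z := rfl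
  have h1 : ‖(z' : X) - (T x : X)‖ < (N : ℝ) - k := by
    have htri : ‖z - (T x : X)‖ ≤ ‖z - p‖ + ‖p - (T x : X)‖ :=
      norm_sub_le_norm_sub_add_norm_sub _ _ _
    rw [hz'co]
    rw [hpTx] at htri
    rw [hR] at *
    linarith
  have h2 : (N : ℝ) ≤ ‖(z' : X) - (T y : X)‖ := by
    have htri : ‖p - (T y : X)‖ ≤ ‖p - z‖ + ‖z - (T y : X)‖ :=
      norm_sub_le_norm_sub_add_norm_sub _ _ _
    rw [hz'co]
    rw [hpTy] at htri
    rw [hR] at *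
    linarith
  set w : S := T' z' with hw
  have hTw : T w = z' := hinv₂ z'
  have hm₀N : m₀ ≤ N := by omega
  have hm₀Nk : m₀ ≤ m₀ + 1 := by omega
  have hcast2 : ((m₀ + 1 : ℕ) : ℝ) = (N : ℝ) - k := by
    rw [hNcast]; push_cast; ring
  have hwx : ‖(w : X) - (x : X)‖ < (N : ℝ) - k := by
    have h3 := (hT (m₀ + 1) hm₀Nk w x).mpr
    rw [hTw, hcast2] at h3
    exact h3 h1
  have hwy : (N : ℝ) ≤ ‖(w : X) - (y : X)‖ := by
    by_contra hc
    push_neg at hc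
    have h4 := (hT N hm₀N w y).mp hc
    rw [hTw] at h4
    linarith
  have htri : ‖(w : X) - (y : X)‖ ≤ ‖(w : X) - (x : X)‖ + ‖(x : X) - (y : X)‖ :=
    norm_sub_le_norm_sub_add_norm_sub _ _ _
  linarith

lemma step_aux_lemB {X : Type*} [NormedAddCommGroup X] [NormedSpace ℝ X]
    (S : Set X) (hS : Dense S) (T T' : S → S)
    (hinv₁ : Function.LeftInverse T' T) (hinv₂ : Function.RightInverse T' T)
    (m₀ : ℕ)
    (hT : ∀ m : ℕ, m₀ ≤ m → ∀ x y : S,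
      ‖(x : X) - (y : X)‖ < (m : ℝ) ↔ ‖(T x : X) - (T y : X)‖ < (m : ℝ))
    (hT'c : Continuous T')
    (k : ℕ) (x y : S) (h : ‖(x : X) - (y : X)‖ < (k : ℝ)) :
    ‖(T x : X) - (T y : X)‖ < (k : ℝ) := by
  have hA := step_aux_lemA S hS T T' hinv₂ m₀ hT k x y h
  rcases lt_or_eq_of_le hA with h' | h'
  · exact h'
  exfalso
  -- h' : ‖Tx - Ty‖ = k
  set d : ℝ := ‖(x : X) - (y : X)‖ with hd
  have hdnn : 0 ≤ d := norm_nonneg _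
  have hkpos : (0:ℝ) < k := lt_of_le_of_lt hdnn h
  have hvk : ‖(T y : X) - (T x : X)‖ = (k : ℝ) := by rw [norm_sub_rev]; exact h'
  have hvne : ‖(T y : X) - (T x : X)‖ ≠ 0 := by rw [hvk]; exact ne_of_gt hkpos
  set ε₀ : ℝ := ((k : ℝ) - d) / 2 with hε₀
  have hε₀pos : 0 < ε₀ := by rw [hε₀]; linarith
  obtain ⟨δ, hδpos, hδ⟩ := Metric.continuous_iff.mp hT'c (T y) ε₀ hε₀pos
  obtain ⟨s, hspos, hs1, hsδ⟩ : ∃ s : ℝ, 0 < s ∧ s ≤ 1 ∧ s ≤ δ / 2 :=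
    ⟨min (δ / 2) 1, lt_min (by linarith) one_pos, min_le_right _ _, min_le_left _ _⟩
  set q : X := (T y : X) + (s / k) • ((T y : X) - (T x : X)) with hq
  have hqTy : ‖q - (T y : X)‖ = s := by
    have he : q - (T y : X) = (s / k) • ((T y : X) - (T x : X)) := by rw [hq]; abel
    rw [he, norm_smul, Real.norm_eq_abs, abs_of_pos (by positivity), hvk,
      div_mul_cancel₀ _ (ne_of_gt hkpos)]
  have hqTx : ‖q - (T x : X)‖ = (k : ℝ) + s := by
    have he : q - (T x : X) = (1 + s / k) • ((T y : X) - (T x : X)) := by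
      rw [hq, add_smul, one_smul]; abel
    rw [he, norm_smul, Real.norm_eq_abs, abs_of_pos (by positivity), hvk]
    field_simp
  obtain ⟨z, hzS, hz⟩ := Metric.mem_closure_iff.mp (hS q) (s / 2) (by linarith)
  have hzq : ‖z - q‖ < s / 2 := by rw [← dist_eq_norm, dist_comm]; exact hz
  have hqz : ‖q - z‖ < s / 2 := by rw [← dist_eq_norm]; exact hz
  set z' : S := ⟨z, hzS⟩ with hz'def
  have hz'co : (z' : X) = z := rfl
  have hzTy : dist z' (T y) < δ := by
    rw [Subtype.dist_eq, dist_eq_norm, hz'co]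
    have htri : ‖z - (T y : X)‖ ≤ ‖z - q‖ + ‖q - (T y : X)‖ :=
      norm_sub_le_norm_sub_add_norm_sub _ _ _
    rw [hqTy] at htri
    linarith
  have hy'' := hδ z' hzTy
  rw [hinv₁ y, Subtype.dist_eq, dist_eq_norm] at hy''
  -- hy'' : ‖(T' z' : X) - y‖ < ε₀
  set y'' : S := T' z' with hy''def
  have hy2 : ‖(y : X) - (y'' : X)‖ < ε₀ := by rw [norm_sub_rev]; exact hy''
  have hxy'' : ‖(x : X) - (y'' : X)‖ < (k : ℝ) := by
    have htri : ‖(x : X) - (y'' : X)‖ ≤ ‖(x : X) - (y : X)‖ + ‖(y : X) - (y'' : X)‖ :=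
      norm_sub_le_norm_sub_add_norm_sub _ _ _
    rw [← hd] at htri
    rw [hε₀] at hy2
    linarith
  have hA2 := step_aux_lemA S hS T T' hinv₂ m₀ hT k x y'' hxy''
  have hTy'' : T y'' = z' := hinv₂ z'
  rw [hTy''] at hA2
  -- hA2 : ‖Tx - z'‖ ≤ k
  have hbig : (k : ℝ) + s / 2 < ‖z - (T x : X)‖ := by
    have htri : ‖q - (T x : X)‖ ≤ ‖q - z‖ + ‖z - (T x : X)‖ :=
      norm_sub_le_norm_sub_add_norm_sub _ _ _
    rw [hqTx] at htri
    linarith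
  rw [norm_sub_rev, hz'co] at hA2
  linarith

theorem stmt_2 {X : Type*} [NormedAddCommGroup X] [NormedSpace ℝ X]
    (S : Set X) (hS : Dense S) (T T' : S → S)
    (hinv₁ : Function.LeftInverse T' T) (hinv₂ : Function.RightInverse T' T)
    (m₀ : ℕ)
    (hT : ∀ m : ℕ, m₀ ≤ m → ∀ x y : S,
      ‖(x : X) - (y : X)‖ < (m : ℝ) ↔ ‖(T x : X) - (T y : X)‖ < (m : ℝ))
    (hTc : Continuous T) (hT'c : Continuous T') :
    ∀ x y : S, ∀ k : ℕ,
      ‖(x : X) - (y : X)‖ < (k : ℝ) ↔ ‖(T x : X) - (T y : X)‖ < (k : ℝ) := by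
  have hT' : ∀ m : ℕ, m₀ ≤ m → ∀ a b : S,
      ‖(a : X) - (b : X)‖ < (m : ℝ) ↔ ‖(T' a : X) - (T' b : X)‖ < (m : ℝ) := by
    intro m hm a b
    have h0 := hT m hm (T' a) (T' b)
    rw [hinv₂ a, hinv₂ b] at h0
    exact h0.symm
  intro x y k
  constructor
  · exact step_aux_lemB S hS T T' hinv₁ hinv₂ m₀ hT hT'c k x y
  · intro hk
    have h1 := step_aux_lemB S hS T' T hinv₂ hinv₁ m₀ hT' hTc k (T x) (T y) hk
    rwa [hinv₁ x, hinv₁ y] at h1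
end

section
/- If T is a step-isometry on a dense subset S of a normed space X (i.e., ⌊‖x-y‖⌋ = ⌊‖Tx-Ty‖⌋ for all x,y ∈ S), then T preserves integer distances: for all x, y ∈ S and k ∈ ℕ, ‖x - y‖ = k iff ‖T x - T y‖ = k. -/
lemma key_step {X : Type*} [NormedAddCommGroup X] [NormedSpace ℝ X]
    (S : Set X) (hS : Dense S) (T : S → S) (hsurj : Function.Surjective T)
    (hT : ∀ x y : S, ⌊‖(x : X) - (y : X)‖⌋ = ⌊‖(T x : X) - (T y : X)‖⌋)
    (x y : S) (k : ℕ) (hxy : ‖(x : X) - (y : X)‖ = (k : ℝ)) :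
    ‖(T x : X) - (T y : X)‖ = (k : ℝ) := by
  obtain ⟨d, hd⟩ : ∃ d : ℝ, ‖(T x : X) - (T y : X)‖ = d := ⟨_, rfl⟩
  rw [hd]
  have hfl : ⌊d⌋ = (k : ℤ) := by
    rw [← hd, ← hT x y, hxy]
    exact_mod_cast Int.floor_intCast (k : ℤ)
  have hdk : (k : ℝ) ≤ d := by
    have := Int.floor_le d
    rw [hfl] at this; exact_mod_cast this
  have hdk1 : d < (k : ℝ) + 1 := by
    have := Int.lt_floor_add_one d
    rw [hfl] at this; exact_mod_cast this
  by_contra hne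
  obtain ⟨ε, hεd⟩ : ∃ e : ℝ, d - (k : ℝ) = e := ⟨_, rfl⟩
  have hε : 0 < ε := by
    rw [← hεd]
    exact sub_pos.mpr (lt_of_le_of_ne hdk (Ne.symm hne))
  have hε1 : ε < 1 := by rw [← hεd]; linarith
  have hk0 : (0:ℝ) ≤ (k:ℝ) := Nat.cast_nonneg k
  have hd0 : 0 < d := by linarith
  obtain ⟨t, htdef⟩ : ∃ t : ℝ, (k : ℝ) + 2 + ε / 2 = t := ⟨_, rfl⟩
  have htd : 1 < t / d := by
    rw [lt_div_iff₀ hd0, one_mul, ← htdef]; linarith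
  obtain ⟨q, hq⟩ : ∃ q : X,
      (T x : X) + (t / d) • ((T y : X) - (T x : X)) = q := ⟨_, rfl⟩
  have hq1 : ‖q - (T x : X)‖ = t := by
    have h0 : q - (T x : X) = (t / d) • ((T y : X) - (T x : X)) := by
      rw [← hq]; abel
    rw [h0, norm_smul, Real.norm_eq_abs, norm_sub_rev, hd,
      abs_of_pos (by positivity : (0:ℝ) < t / d)]
    field_simp
  have hq2 : ‖q - (T y : X)‖ = t - d := by
    have h1 : q - (T y : X) = (t / d - 1) • ((T y : X) - (T x : X)) := by
      rw [← hq, sub_smul, one_smul]; abel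
    rw [h1, norm_smul, Real.norm_eq_abs, norm_sub_rev, hd,
      abs_of_pos (by linarith)]
    field_simp
  obtain ⟨z, hzb, hzS⟩ := Metric.dense_iff.mp hS q (ε / 4) (by positivity)
  have hdist : ‖z - q‖ < ε / 4 := by
    have := Metric.mem_ball.mp hzb
    rwa [dist_eq_norm] at this
  obtain ⟨w, hw⟩ := hsurj ⟨z, hzS⟩
  have hz1lo : t - ε / 4 ≤ ‖z - (T x : X)‖ := by
    have h := norm_sub_norm_le (q - (T x : X)) (q - z)
    have he : q - (T x : X) - (q - z) = z - (T x : X) := by abel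
    have hn : ‖q - z‖ < ε / 4 := by rw [norm_sub_rev]; exact hdist
    rw [he, hq1] at h
    linarith
  have hz1hi : ‖z - (T x : X)‖ ≤ t + ε / 4 := by
    have h := norm_add_le (z - q) (q - (T x : X))
    have he : z - q + (q - (T x : X)) = z - (T x : X) := by abel
    rw [he, hq1] at h
    linarith
  have hz2lo : t - d - ε / 4 ≤ ‖z - (T y : X)‖ := by
    have h := norm_sub_norm_le (q - (T y : X)) (q - z)
    have he : q - (T y : X) - (q - z) = z - (T y : X) := by abel
    have hn : ‖q - z‖ < ε / 4 := by rw [norm_sub_rev]; exact hdist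
    rw [he, hq2] at h
    linarith
  have hz2hi : ‖z - (T y : X)‖ ≤ t - d + ε / 4 := by
    have h := norm_add_le (z - q) (q - (T y : X))
    have he : z - q + (q - (T y : X)) = z - (T y : X) := by abel
    rw [he, hq2] at h
    linarith
  have hfw1 : ⌊‖(w : X) - (x : X)‖⌋ = (k : ℤ) + 2 := by
    rw [hT w x, hw]
    show ⌊‖z - (T x : X)‖⌋ = (k : ℤ) + 2
    rw [Int.floor_eq_iff]
    constructor
    · push_cast; linarith
    · push_cast; linarith
  have hfw2 : ⌊‖(w : X) - (y : X)‖⌋ = 1 := by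
    rw [hT w y, hw]
    show ⌊‖z - (T y : X)‖⌋ = 1
    rw [Int.floor_eq_iff]
    constructor
    · push_cast; linarith
    · push_cast; linarith
  have hw1 : (k : ℝ) + 2 ≤ ‖(w : X) - (x : X)‖ := by
    have := Int.floor_le ‖(w : X) - (x : X)‖
    rw [hfw1] at this; push_cast at this; linarith
  have hw2 : ‖(w : X) - (y : X)‖ < 2 := by
    have := Int.lt_floor_add_one ‖(w : X) - (y : X)‖
    rw [hfw2] at this; push_cast at this; linarith
  have htri : ‖(w : X) - (x : X)‖ ≤ ‖(w : X) - (y : X)‖ + ‖(x : X) - (y : X)‖ := by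
    calc ‖(w : X) - (x : X)‖ = ‖(w : X) - (y : X) - ((x : X) - (y : X))‖ := by
          congr 1; abel
      _ ≤ _ := norm_sub_le _ _
  rw [hxy] at htri
  linarith

theorem stmt_3 {X : Type*} [NormedAddCommGroup X] [NormedSpace ℝ X]
    (S : Set X) (hS : Dense S) (T : S → S) (hbij : Function.Bijective T)
    (hT : ∀ x y : S, ⌊‖(x : X) - (y : X)‖⌋ = ⌊‖(T x : X) - (T y : X)‖⌋) :
    ∀ x y : S, ∀ k : ℕ,
      ‖(x : X) - (y : X)‖ = (k : ℝ) ↔ ‖(T x : X) - (T y : X)‖ = (k : ℝ) := by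
  intro x y k
  constructor
  · exact key_step S hS T hbij.surjective hT x y k
  · intro h
    set E : S ≃ S := Equiv.ofBijective T hbij with hE
    have hTE : ∀ a : S, T a = E a := fun a => rfl
    have hT' : ∀ a b : S, ⌊‖(a : X) - (b : X)‖⌋ =
        ⌊‖(E.symm a : X) - (E.symm b : X)‖⌋ := by
      intro a b
      have := hT (E.symm a) (E.symm b)
      rw [hTE, hTE, E.apply_symm_apply, E.apply_symm_apply] at this
      exact this.symm
    have := key_step S hS E.symm E.symm.surjective hT' (T x) (T y) k h
    have hx : E.symm (T x) = x := by rw [hTE, E.symm_apply_apply]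
    have hy : E.symm (T y) = y := by rw [hTE, E.symm_apply_apply]
    rwa [hx, hy] at this
end

section
/- For each n ≥ 1, define g_n : [0,1] → [0,1] to be the piecewise linear function with g_n(0)=0, g_n(1/(n+1)) = 1 - 1/(n+1), g_n(1)=1, and define h_n : ℝ → ℝ by h_n(x) = ⌊x⌋ + g_n(x - ⌊x⌋). Then each h_n is a step-isometry on ℝ: for all x, y ∈ ℝ, ⌊|x - y|⌋ = ⌊|h_n(x) - h_n(y)|⌋. -/
/-- The piecewise linear bijection of `[0,1]` with `g n 0 = 0`,
`g n (1/(n+1)) = 1 - 1/(n+1)` and `g n 1 = 1`. -/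
noncomputable def gFn (n : ℕ) (t : ℝ) : ℝ :=
  if t ≤ 1 / (n + 1) then n * t else 1 - (1 - t) / n

/-- The step-isometry of `ℝ` obtained from `gFn` via integer parts. -/
noncomputable def hFn (n : ℕ) (x : ℝ) : ℝ :=
  ⌊x⌋ + gFn n (x - ⌊x⌋)

lemma gFn_bounds {n : ℕ} (hn : 1 ≤ n) {a : ℝ} (h0 : 0 ≤ a) (h1 : a < 1) :
    0 ≤ gFn n a ∧ gFn n a < 1 := by
  have hn' : (1:ℝ) ≤ n := by exact_mod_cast hn
  have hn0 : (0:ℝ) < n := by linarith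
  have hc : (0:ℝ) < n + 1 := by linarith
  unfold gFn
  split_ifs with h
  · constructor
    · positivity
    · rw [le_div_iff₀ hc] at h
      nlinarith
  · push_neg at h
    rw [div_lt_iff₀ hc] at h
    constructor
    · have h' : (1 - a) / n ≤ 1 - a := by
        rw [div_le_iff₀ hn0]
        nlinarith
      linarith
    · have : 0 < (1 - a) / n := div_pos (by linarith) hn0
      linarith

lemma gFn_le {n : ℕ} (hn : 1 ≤ n) {a b : ℝ} (ha : 0 ≤ a) (hb : b ≤ 1)
    (hab : a ≤ b) : gFn n a ≤ gFn n b := by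
  have hn' : (1:ℝ) ≤ n := by exact_mod_cast hn
  have hn0 : (0:ℝ) < n := by linarith
  have hc : (0:ℝ) < n + 1 := by linarith
  unfold gFn
  split_ifs with h1 h2 h2
  · nlinarith
  · push_neg at h2
    rw [le_div_iff₀ hc] at h1
    rw [div_lt_iff₀ hc] at h2
    have h3 : (1 - b) / n ≤ 1 - n * a := by
      rw [div_le_iff₀ hn0]
      nlinarith
    linarith
  · exact absurd (hab.trans h2) h1
  · have : (1 - b) / n ≤ (1 - a) / n := (div_le_div_iff_of_pos_right hn0).2 (by linarith)
    linarith

lemma gFn_lt {n : ℕ} (hn : 1 ≤ n) {a b : ℝ} (ha : 0 ≤ a) (hb : b ≤ 1)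
    (hab : a < b) : gFn n a < gFn n b := by
  have hn' : (1:ℝ) ≤ n := by exact_mod_cast hn
  have hn0 : (0:ℝ) < n := by linarith
  have hc : (0:ℝ) < n + 1 := by linarith
  unfold gFn
  split_ifs with h1 h2 h2
  · nlinarith
  · push_neg at h2
    rw [le_div_iff₀ hc] at h1
    rw [div_lt_iff₀ hc] at h2
    have h3 : (1 - b) / n < 1 - n * a := by
      rw [div_lt_iff₀ hn0]
      nlinarith
    linarith
  · exact absurd (hab.le.trans h2) h1
  · have : (1 - b) / n < (1 - a) / n := (div_lt_div_iff_of_pos_right hn0).2 (by linarith)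
    linarith

lemma hFn_key (n : ℕ) (hn : 1 ≤ n) (x y : ℝ) :
    ⌊x - y⌋ = ⌊hFn n x - hFn n y⌋ := by
  have ha0 := Int.fract_nonneg x
  have ha1 := Int.fract_lt_one x
  have hb0 := Int.fract_nonneg y
  have hb1 := Int.fract_lt_one y
  obtain ⟨hga0, hga1⟩ := gFn_bounds hn ha0 ha1
  obtain ⟨hgb0, hgb1⟩ := gFn_bounds hn hb0 hb1
  have hx : hFn n x - hFn n y =
      ((⌊x⌋ - ⌊y⌋ : ℤ) : ℝ) + (gFn n (Int.fract x) - gFn n (Int.fract y)) := by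
    unfold hFn Int.fract; push_cast; ring
  have hxy : x - y = ((⌊x⌋ - ⌊y⌋ : ℤ) : ℝ) + (Int.fract x - Int.fract y) := by
    unfold Int.fract; push_cast; ring
  rw [hx, hxy, Int.floor_intCast_add, Int.floor_intCast_add]
  congr 1
  rcases le_or_gt (Int.fract y) (Int.fract x) with h | h
  · have hg := gFn_le hn hb0 ha1.le h
    rw [Int.floor_eq_zero_iff.2 ⟨by linarith, by linarith⟩,
        Int.floor_eq_zero_iff.2 ⟨by linarith, by linarith⟩]
  · have hg := gFn_lt hn ha0 hb1.le h
    have e1 : ⌊Int.fract x - Int.fract y⌋ = -1 := by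
      apply Int.floor_eq_iff.2
      constructor <;> [push_cast; push_cast] <;> linarith
    have e2 : ⌊gFn n (Int.fract x) - gFn n (Int.fract y)⌋ = -1 := by
      apply Int.floor_eq_iff.2
      constructor <;> [push_cast; push_cast] <;> linarith
    rw [e1, e2]

theorem stmt_4 (n : ℕ) (hn : 1 ≤ n) :
    ∀ x y : ℝ, ⌊|x - y|⌋ = ⌊|hFn n x - hFn n y|⌋ := by
  intro x y
  rcases le_total y x with h | h
  · have key := hFn_key n hn x y
    have h1 : 0 ≤ x - y := by linarith
    have h2 : 0 ≤ hFn n x - hFn n y := by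
      have : (0:ℤ) ≤ ⌊hFn n x - hFn n y⌋ := by
        rw [← key]; exact Int.floor_nonneg.2 h1
      have := (Int.floor_le (hFn n x - hFn n y))
      calc (0:ℝ) ≤ (⌊hFn n x - hFn n y⌋ : ℝ) := by exact_mod_cast ‹(0:ℤ) ≤ _›
        _ ≤ _ := Int.floor_le _
    rw [abs_of_nonneg h1, abs_of_nonneg h2]; exact key
  · have key := hFn_key n hn y x
    have h1 : 0 ≤ y - x := by linarith
    have h2 : 0 ≤ hFn n y - hFn n x := by
      have : (0:ℤ) ≤ ⌊hFn n y - hFn n x⌋ := by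
        rw [← key]; exact Int.floor_nonneg.2 h1
      calc (0:ℝ) ≤ (⌊hFn n y - hFn n x⌋ : ℝ) := by exact_mod_cast ‹(0:ℤ) ≤ _›
        _ ≤ _ := Int.floor_le _
    rw [abs_sub_comm x y, abs_sub_comm (hFn n x) (hFn n y),
        abs_of_nonneg h1, abs_of_nonneg h2]; exact key
end

section
/- Let X be a normed space whose closed unit ball has a strongly extreme point x. Then for every ε > 0 there exist two open unit balls whose intersection is nonempty and has diameter at most ε. Consequently, the open unit balls (all translates of the open unit ball) form a subbase for the norm topology on X. -/
theorem stmt_5 {X : Type*} [NormedAddCommGroup X] [NormedSpace ℝ X]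
    (x : X) (hx : ‖x‖ ≤ 1)
    (hse : ∀ ε > (0 : ℝ), ∃ δ > (0 : ℝ), ∀ y : X,
      ‖x + y‖ < 1 + δ → ‖x - y‖ < 1 + δ → ‖y‖ < ε) :
    (∀ ε > (0 : ℝ), ∃ c₁ c₂ : X,
      (Metric.ball c₁ 1 ∩ Metric.ball c₂ 1).Nonempty ∧
      Metric.diam (Metric.ball c₁ 1 ∩ Metric.ball c₂ 1) ≤ ε) ∧
    TopologicalSpace.generateFrom {U : Set X | ∃ c : X, U = Metric.ball c 1} =
      (inferInstance : TopologicalSpace X) := by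
  have key : ∀ ε > (0 : ℝ), ∀ p : X, ∃ c₁ c₂ : X,
      p ∈ Metric.ball c₁ 1 ∩ Metric.ball c₂ 1 ∧
      ∀ z ∈ Metric.ball c₁ 1 ∩ Metric.ball c₂ 1, ‖z - p‖ < ε / 2 := by
    intro ε hε p
    obtain ⟨δ, hδ, hδ'⟩ := hse (ε / 2) (by positivity)
    have h1δ : (0:ℝ) < 1 + δ := by linarith
    set c : X := (1 + δ)⁻¹ • x with hc
    have hxc : (1 + δ) • c = x := by
      rw [hc, smul_smul, mul_inv_cancel₀ (ne_of_gt h1δ), one_smul]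
    have hcnorm : ‖c‖ < 1 := by
      rw [hc, norm_smul, Real.norm_eq_abs, abs_of_pos (inv_pos.mpr h1δ)]
      calc (1 + δ)⁻¹ * ‖x‖ ≤ (1 + δ)⁻¹ * 1 := by
            apply mul_le_mul_of_nonneg_left hx (le_of_lt (inv_pos.mpr h1δ))
        _ < 1 := by
            rw [mul_one]
            exact inv_lt_one_of_one_lt₀ (by linarith)
    refine ⟨p + c, p - c, ⟨?_, ?_⟩, ?_⟩
    · simp [Metric.mem_ball, dist_eq_norm, hcnorm]
    · simpa [Metric.mem_ball, dist_eq_norm, norm_sub_rev] using hcnorm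
    · rintro z ⟨hz1, hz2⟩
      rw [Metric.mem_ball, dist_eq_norm] at hz1 hz2
      have hy := hδ' ((1 + δ) • (z - p)) ?_ ?_
      · rw [norm_smul, Real.norm_eq_abs, abs_of_pos h1δ] at hy
        nlinarith [norm_nonneg (z - p)]
      · have : x + (1 + δ) • (z - p) = (1 + δ) • (z - (p - c)) := by
          rw [← hxc]; module
        rw [this, norm_smul, Real.norm_eq_abs, abs_of_pos h1δ]
        calc (1 + δ) * ‖z - (p - c)‖ < (1 + δ) * 1 :=
              mul_lt_mul_of_pos_left hz2 h1δ
          _ = 1 + δ := mul_one _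
      · have : x - (1 + δ) • (z - p) = -((1 + δ) • (z - (p + c))) := by
          rw [← hxc]; module
        rw [this, norm_neg, norm_smul, Real.norm_eq_abs, abs_of_pos h1δ]
        calc (1 + δ) * ‖z - (p + c)‖ < (1 + δ) * 1 :=
              mul_lt_mul_of_pos_left hz1 h1δ
          _ = 1 + δ := mul_one _
  constructor
  · intro ε hε
    obtain ⟨c₁, c₂, hmem, hsmall⟩ := key ε hε 0
    refine ⟨c₁, c₂, ⟨0, hmem⟩, ?_⟩
    apply Metric.diam_le_of_forall_dist_le (le_of_lt hε)
    intro a ha b hb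
    have h1 := hsmall a ha
    have h2 := hsmall b hb
    simp only [sub_zero] at h1 h2
    calc dist a b ≤ ‖a‖ + ‖b‖ := by
          rw [dist_eq_norm]; exact norm_sub_le _ _
      _ ≤ ε := by linarith
  · refine le_antisymm ?_ ?_
    · -- generateFrom ≤ std : every std-open is generated
      intro U hU
      have : U = ⋃₀ {V | TopologicalSpace.GenerateOpen
          {U : Set X | ∃ c : X, U = Metric.ball c 1} V ∧ V ⊆ U} := by
        apply Set.Subset.antisymm
        · intro p hp
          obtain ⟨r, hr, hrU⟩ := Metric.isOpen_iff.mp hU p hp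
          obtain ⟨c₁, c₂, hmem, hsmall⟩ := key r hr p
          refine Set.mem_sUnion.mpr ⟨Metric.ball c₁ 1 ∩ Metric.ball c₂ 1, ⟨?_, ?_⟩, hmem⟩
          · exact TopologicalSpace.GenerateOpen.inter _ _
              (TopologicalSpace.GenerateOpen.basic _ ⟨c₁, rfl⟩)
              (TopologicalSpace.GenerateOpen.basic _ ⟨c₂, rfl⟩)
          · intro z hz
            apply hrU
            rw [Metric.mem_ball, dist_eq_norm]
            have := hsmall z hz
            linarith
        · rintro p ⟨V, ⟨_, hVU⟩, hpV⟩
          exact hVU hpV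
      rw [this]
      exact TopologicalSpace.GenerateOpen.sUnion _ (fun V hV => hV.1)
    · exact le_generateFrom (by rintro s ⟨c, rfl⟩; exact Metric.isOpen_ball)
end

section
/- In c₀ (the space of real sequences converging to 0 with the sup norm), the intersection of any two open balls of radius 1 is either empty or has diameter equal to 2. -/
open Metric Filter ZeroAtInftyContinuousMap Set

/-- The "single bump" sequence: value `t` at `n`, zero elsewhere. -/
noncomputable def sgl (n : ℕ) (t : ℝ) : ZeroAtInftyContinuousMap ℕ ℝ where
  toFun := fun m => if m = n then t else 0
  continuous_toFun := continuous_of_discreteTopology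
  zero_at_infty' := by
    rw [cocompact_eq_atTop (α := ℕ)]
    have h : ∀ᶠ m in atTop, (0 : ℝ) = (if m = n then t else 0) := by
      filter_upwards [eventually_gt_atTop n] with m hm
      simp [hm.ne']
    exact tendsto_const_nhds.congr' h

@[simp] lemma sgl_apply (n m : ℕ) (t : ℝ) : sgl n t m = if m = n then t else 0 := rfl

lemma c0_norm_le_iff (f : ZeroAtInftyContinuousMap ℕ ℝ) {C : ℝ} (hC : 0 ≤ C) :
    ‖f‖ ≤ C ↔ ∀ m, |f m| ≤ C := by
  rw [← norm_toBCF_eq_norm, BoundedContinuousFunction.norm_le hC]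
  simp [Real.norm_eq_abs]

lemma abs_apply_le_norm (f : ZeroAtInftyContinuousMap ℕ ℝ) (m : ℕ) : |f m| ≤ ‖f‖ := by
  have := f.toBCF.norm_coe_le_norm m
  simpa [Real.norm_eq_abs] using this

lemma norm_sgl (n : ℕ) (t : ℝ) : ‖sgl n t‖ = |t| := by
  refine le_antisymm ?_ ?_
  · rw [c0_norm_le_iff _ (abs_nonneg t)]
    intro m
    by_cases hm : m = n <;> simp [hm, abs_nonneg]
  · simpa using abs_apply_le_norm (sgl n t) n

lemma key {c x : ZeroAtInftyContinuousMap ℕ ℝ} (hx : dist x c < 1) {n : ℕ} {δ : ℝ}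
    (hδ : 0 < δ) (hn : |x n - c n| < δ) {s : ℝ} (hs : |s| ≤ 1 - 2 * δ) :
    dist (x + sgl n s) c < 1 := by
  rw [dist_eq_norm] at hx ⊢
  have hmax : (0 : ℝ) ≤ max ‖x - c‖ (1 - δ) :=
    le_trans (norm_nonneg _) (le_max_left _ _)
  have h1 : ‖x + sgl n s - c‖ ≤ max ‖x - c‖ (1 - δ) := by
    rw [c0_norm_le_iff _ hmax]
    intro m
    by_cases hm : m = n
    · have hval : (x + sgl n s - c) m = (x m - c m) + s := by
        simp only [ZeroAtInftyContinuousMap.coe_sub, ZeroAtInftyContinuousMap.coe_add,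
          Pi.add_apply, Pi.sub_apply, sgl_apply, if_pos hm]
        ring
      rw [hval]
      have hnm : |x m - c m| ≤ δ := by rw [hm]; exact hn.le
      have hub : |(x m - c m) + s| ≤ 1 - δ := by
        calc |(x m - c m) + s| ≤ |x m - c m| + |s| := abs_add_le _ _
          _ ≤ δ + (1 - 2 * δ) := add_le_add hnm hs
          _ = 1 - δ := by ring
      exact le_trans hub (le_max_right _ _)
    · have : |(x + sgl n s - c) m| = |(x - c) m| := by
        simp [ZeroAtInftyContinuousMap.coe_sub, ZeroAtInftyContinuousMap.coe_add, hm]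
      rw [this]
      exact le_trans (abs_apply_le_norm _ m) (le_max_left _ _)
  exact lt_of_le_of_lt h1 (max_lt hx (by linarith))

theorem stmt_6 (c₁ c₂ : ZeroAtInftyContinuousMap ℕ ℝ) :
    Metric.ball c₁ 1 ∩ Metric.ball c₂ 1 = ∅ ∨
    Metric.diam (Metric.ball c₁ 1 ∩ Metric.ball c₂ 1) = 2 := by
  rcases eq_empty_or_nonempty (ball c₁ 1 ∩ ball c₂ 1) with h | ⟨x, hx1, hx2⟩
  · exact Or.inl h
  right
  have hbdd : Bornology.IsBounded (ball c₁ 1 ∩ ball c₂ 1) :=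
    isBounded_ball.subset inter_subset_left
  refine le_antisymm ?_ ?_
  · calc diam (ball c₁ 1 ∩ ball c₂ 1) ≤ diam (ball c₁ 1) :=
        diam_mono inter_subset_left isBounded_ball
      _ ≤ 2 * 1 := diam_ball zero_le_one
      _ = 2 := by ring
  · refine le_of_forall_pos_le_add fun ε hε => ?_
    set δ : ℝ := min (ε / 4) (1 / 4) with hδdef
    have hδpos : 0 < δ := lt_min (by linarith) (by norm_num)
    have hδle : δ ≤ 1 / 4 := min_le_right _ _
    have hδε : δ ≤ ε / 4 := min_le_left _ _
    set t : ℝ := 1 - 2 * δ with htdef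
    have ht0 : 0 ≤ t := by simp only [htdef]; linarith
    -- find n with both differences small
    simp only [mem_ball] at hx1 hx2
    have h1 : Tendsto (fun m => (x - c₁) m) atTop (nhds 0) := by
      have := (x - c₁).zero_at_infty'
      rwa [cocompact_eq_atTop (α := ℕ)] at this
    have h2 : Tendsto (fun m => (x - c₂) m) atTop (nhds 0) := by
      have := (x - c₂).zero_at_infty'
      rwa [cocompact_eq_atTop (α := ℕ)] at this
    have hev : ∀ᶠ m in atTop, |x m - c₁ m| < δ ∧ |x m - c₂ m| < δ := by
      filter_upwards [Metric.tendsto_nhds.mp h1 δ hδpos,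
        Metric.tendsto_nhds.mp h2 δ hδpos] with m hm1 hm2
      constructor
      · simpa [Real.dist_eq, ZeroAtInftyContinuousMap.coe_sub] using hm1
      · simpa [Real.dist_eq, ZeroAtInftyContinuousMap.coe_sub] using hm2
    obtain ⟨n, hn⟩ := hev.exists
    have habs_t : |t| ≤ 1 - 2 * δ := by rw [abs_of_nonneg ht0]
    have habs_t' : |(-t)| ≤ 1 - 2 * δ := by rw [abs_neg, abs_of_nonneg ht0]
    have hy1 : x + sgl n t ∈ ball c₁ 1 := mem_ball.mpr (key hx1 hδpos hn.1 habs_t)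
    have hy2 : x + sgl n t ∈ ball c₂ 1 := mem_ball.mpr (key hx2 hδpos hn.2 habs_t)
    have hz1 : x + sgl n (-t) ∈ ball c₁ 1 := mem_ball.mpr (key hx1 hδpos hn.1 habs_t')
    have hz2 : x + sgl n (-t) ∈ ball c₂ 1 := mem_ball.mpr (key hx2 hδpos hn.2 habs_t')
    have hdist : dist (x + sgl n t) (x + sgl n (-t)) = 2 * t := by
      rw [dist_eq_norm]
      have : (x + sgl n t) - (x + sgl n (-t)) = sgl n (2 * t) := by
        ext m
        by_cases hm : m = n <;>
          simp [ZeroAtInftyContinuousMap.coe_sub, ZeroAtInftyContinuousMap.coe_add, hm] <;> ring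
      rw [this, norm_sgl, abs_of_nonneg (by linarith)]
    have hle : dist (x + sgl n t) (x + sgl n (-t)) ≤ diam (ball c₁ 1 ∩ ball c₂ 1) :=
      dist_le_diam_of_mem hbdd ⟨hy1, hy2⟩ ⟨hz1, hz2⟩
    rw [hdist] at hle
    have : 2 - ε ≤ 2 * t := by simp only [htdef]; linarith
    linarith
end

section
/- In L¹(0,1), any two open balls of radius 1 whose centers are at distance strictly less than 2 and with nonempty intersection have intersection of diameter 2: specifically, if f ∈ L¹(0,1) with 0 < ‖f‖ = 2λ < 2, then for every μ with λ < μ < 1 there exist g₁, g₂ in B(0,1) ∩ B(f,1) with ‖g₁ - g₂‖ = 2μ; hence the diameter of B(0,1) ∩ B(f,1) is 2. -/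
open MeasureTheory

local notation "ν" => (MeasureTheory.volume.restrict (Set.Ioo (0:ℝ) 1))

private lemma stmt7_pair
    (f : Lp ℝ 1 (volume.restrict (Set.Ioo (0:ℝ) 1)))
    (l : ℝ) (hl0 : 0 < l) (hl1 : l < 1) (hf : ‖f‖ = 2 * l)
    (μ : ℝ) (hlμ : l < μ) (hμ1 : μ < 1) :
    ∃ g₁ g₂ : Lp ℝ 1 (volume.restrict (Set.Ioo (0:ℝ) 1)),
      g₁ ∈ Metric.closedBall 0 1 ∩ Metric.closedBall f 1 ∧
      g₂ ∈ Metric.closedBall 0 1 ∩ Metric.closedBall f 1 ∧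
      ‖g₁ - g₂‖ = 2 * μ := by
  set F : ℝ → ℝ := (f : ℝ → ℝ) with hFdef
  have hF : Integrable F ν := L1.integrable_coeFn f
  have hnorm : ∫ x, |F x| ∂ν = 2 * l := by
    rw [← hf, L1.norm_eq_integral_norm f]
    simp [Real.norm_eq_abs]
    rfl
  -- the primitive of |F| extended by zero
  set G : ℝ → ℝ := (Set.Ioo (0:ℝ) 1).indicator (fun x => |F x|) with hGdef
  have hG : Integrable G volume := by
    have : IntegrableOn (fun x => |F x|) (Set.Ioo (0:ℝ) 1) volume := hF.abs
    exact this.integrable_indicator measurableSet_Ioo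
  set φ : ℝ → ℝ := fun t => ∫ x in (0:ℝ)..t, G x with hφdef
  have hcont : Continuous φ := hG.continuous_primitive 0
  have key : ∀ t : ℝ, 0 ≤ t →
      φ t = ∫ x in Set.Iic t, |F x| ∂ν := by
    intro t ht
    have h1 : φ t = ∫ x in Set.Ioc 0 t, G x ∂volume :=
      intervalIntegral.integral_of_le ht
    have hset : Set.Ioo (0:ℝ) 1 ∩ Set.Ioc 0 t = Set.Iic t ∩ Set.Ioo 0 1 := by
      ext x
      simp only [Set.mem_inter_iff, Set.mem_Ioo, Set.mem_Ioc, Set.mem_Iic]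
      constructor
      · rintro ⟨⟨hx0, hx1⟩, _, hxt⟩; exact ⟨hxt, hx0, hx1⟩
      · rintro ⟨hxt, hx0, hx1⟩; exact ⟨⟨hx0, hx1⟩, hx0, hxt⟩
    rw [h1, integral_indicator measurableSet_Ioo, Measure.restrict_restrict measurableSet_Ioo,
      Measure.restrict_restrict measurableSet_Iic, hset]
  have φ0 : φ 0 = 0 := intervalIntegral.integral_same
  have φ1 : φ 1 = 2 * l := by
    rw [key 1 zero_le_one, ← hnorm]
    have : Measure.restrict ν (Set.Iic 1) = ν := by
      rw [Measure.restrict_restrict measurableSet_Iic]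
      congr 1
      rw [Set.inter_eq_right.mpr]
      intro x hx
      exact hx.2.le
    rw [this]
  -- IVT
  obtain ⟨a, ha, hφa⟩ : ∃ a ∈ Set.Icc (0:ℝ) 1, φ a = l := by
    have := intermediate_value_Icc (zero_le_one) hcont.continuousOn
    have hl : l ∈ Set.Icc (φ 0) (φ 1) := by
      rw [φ0, φ1]; constructor <;> nlinarith
    obtain ⟨a, ha, h⟩ := this hl
    exact ⟨a, ha, h⟩
  set A : Set ℝ := Set.Iic a with hAdef
  have hA : MeasurableSet A := measurableSet_Iic
  have hIA : ∫ x in A, |F x| ∂ν = l := by rw [← key a ha.1, hφa]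
  have hIAc : ∫ x in Aᶜ, |F x| ∂ν = l := by
    have := integral_add_compl hA hF.abs (μ := ν)
    simp only [hIA] at this
    linarith [this.symm ▸ hnorm, hnorm]
  set c : ℝ := μ / l with hcdef
  have hc1 : 1 < c := (one_lt_div hl0).mpr hlμ
  have hcl : c * l = μ := div_mul_cancel₀ μ (ne_of_gt hl0)
  set h₁ : ℝ → ℝ := A.indicator (fun x => c * F x) with h₁def
  set h₂ : ℝ → ℝ := Aᶜ.indicator (fun x => c * F x) with h₂def
  have int₁ : Integrable h₁ ν := (hF.const_mul c).indicator hA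
  have int₂ : Integrable h₂ ν := (hF.const_mul c).indicator hA.compl
  have mem₁ : MemLp h₁ 1 ν := memLp_one_iff_integrable.mpr int₁
  have mem₂ : MemLp h₂ 1 ν := memLp_one_iff_integrable.mpr int₂
  refine ⟨mem₁.toLp h₁, mem₂.toLp h₂, ?_, ?_, ?_⟩
  · constructor
    · rw [Metric.mem_closedBall, dist_zero_right, L1.norm_eq_integral_norm]
      have : ∫ x, ‖(mem₁.toLp h₁ : ℝ → ℝ) x‖ ∂ν = ∫ x, |h₁ x| ∂ν := by
        refine integral_congr_ae ?_
        filter_upwards [mem₁.coeFn_toLp] with x hx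
        rw [hx, Real.norm_eq_abs]
      rw [this]
      have habs : (fun x => |h₁ x|) = A.indicator (fun x => c * |F x|) := by
        funext x
        by_cases hx : x ∈ A <;>
          simp [h₁def, Set.indicator_of_mem, Set.indicator_of_notMem, hx, abs_mul,
            abs_of_pos (lt_trans one_pos hc1)]
      rw [habs, integral_indicator hA, integral_const_mul, hIA, hcl]
      linarith
    · rw [Metric.mem_closedBall, dist_eq_norm, L1.norm_eq_integral_norm]
      have heq : ∫ x, ‖(mem₁.toLp h₁ - f : Lp ℝ 1 ν) x‖ ∂ν = ∫ x, |h₁ x - F x| ∂ν := by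
        refine integral_congr_ae ?_
        filter_upwards [Lp.coeFn_sub (mem₁.toLp h₁) f, mem₁.coeFn_toLp] with x hx hx'
        rw [hx, Pi.sub_apply, hx', Real.norm_eq_abs, hFdef]
      rw [heq]
      have hint : Integrable (fun x => |h₁ x - F x|) ν := (int₁.sub hF).abs
      rw [← integral_add_compl hA hint]
      have e1 : ∫ x in A, |h₁ x - F x| ∂ν = ∫ x in A, (c - 1) * |F x| ∂ν := by
        refine setIntegral_congr_fun hA (fun x hx => ?_)
        rw [h₁def]; simp only [Set.indicator_of_mem hx]
        rw [show c * F x - F x = (c - 1) * F x by ring, abs_mul,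
          abs_of_pos (by linarith : (0:ℝ) < c - 1)]
      have e2 : ∫ x in Aᶜ, |h₁ x - F x| ∂ν = ∫ x in Aᶜ, |F x| ∂ν := by
        refine setIntegral_congr_fun hA.compl (fun x hx => ?_)
        rw [h₁def]; simp only [Set.indicator_of_notMem (by simpa using hx)]
        rw [zero_sub, abs_neg]
      rw [e1, e2, integral_const_mul, hIA, hIAc]
      linarith
  · constructor
    · rw [Metric.mem_closedBall, dist_zero_right, L1.norm_eq_integral_norm]
      have : ∫ x, ‖(mem₂.toLp h₂ : ℝ → ℝ) x‖ ∂ν = ∫ x, |h₂ x| ∂ν := by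
        refine integral_congr_ae ?_
        filter_upwards [mem₂.coeFn_toLp] with x hx
        rw [hx, Real.norm_eq_abs]
      rw [this]
      have habs : (fun x => |h₂ x|) = Aᶜ.indicator (fun x => c * |F x|) := by
        funext x
        by_cases hx : x ∈ Aᶜ <;>
          simp [h₂def, Set.indicator_of_mem, Set.indicator_of_notMem, hx, abs_mul,
            abs_of_pos (lt_trans one_pos hc1)]
      rw [habs, integral_indicator hA.compl, integral_const_mul, hIAc, hcl]
      linarith
    · rw [Metric.mem_closedBall, dist_eq_norm, L1.norm_eq_integral_norm]
      have heq : ∫ x, ‖(mem₂.toLp h₂ - f : Lp ℝ 1 ν) x‖ ∂ν = ∫ x, |h₂ x - F x| ∂ν := by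
        refine integral_congr_ae ?_
        filter_upwards [Lp.coeFn_sub (mem₂.toLp h₂) f, mem₂.coeFn_toLp] with x hx hx'
        rw [hx, Pi.sub_apply, hx', Real.norm_eq_abs, hFdef]
      rw [heq]
      have hint : Integrable (fun x => |h₂ x - F x|) ν := (int₂.sub hF).abs
      rw [← integral_add_compl hA hint]
      have e1 : ∫ x in A, |h₂ x - F x| ∂ν = ∫ x in A, |F x| ∂ν := by
        refine setIntegral_congr_fun hA (fun x hx => ?_)
        rw [h₂def]; simp only [Set.indicator_of_notMem (Set.notMem_compl_iff.mpr hx)]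
        rw [zero_sub, abs_neg]
      have e2 : ∫ x in Aᶜ, |h₂ x - F x| ∂ν = ∫ x in Aᶜ, (c - 1) * |F x| ∂ν := by
        refine setIntegral_congr_fun hA.compl (fun x hx => ?_)
        rw [h₂def]; simp only [Set.indicator_of_mem hx]
        rw [show c * F x - F x = (c - 1) * F x by ring, abs_mul,
          abs_of_pos (by linarith : (0:ℝ) < c - 1)]
      rw [e1, e2, integral_const_mul, hIA, hIAc]
      linarith
  · rw [L1.norm_eq_integral_norm]
    have heq : ∫ x, ‖(mem₁.toLp h₁ - mem₂.toLp h₂ : Lp ℝ 1 ν) x‖ ∂ν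
        = ∫ x, |h₁ x - h₂ x| ∂ν := by
      refine integral_congr_ae ?_
      filter_upwards [Lp.coeFn_sub (mem₁.toLp h₁) (mem₂.toLp h₂), mem₁.coeFn_toLp,
        mem₂.coeFn_toLp] with x hx hx₁ hx₂
      rw [hx, Pi.sub_apply, hx₁, hx₂, Real.norm_eq_abs]
    rw [heq]
    have habs : (fun x => |h₁ x - h₂ x|) = fun x => c * |F x| := by
      funext x
      by_cases hx : x ∈ A
      · rw [h₁def, h₂def, Set.indicator_of_mem hx, Set.indicator_of_notMem (by simpa using hx)]
        rw [sub_zero, abs_mul, abs_of_pos (lt_trans one_pos hc1)]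
      · rw [h₁def, h₂def, Set.indicator_of_notMem hx, Set.indicator_of_mem (by simpa using hx)]
        rw [zero_sub, abs_neg, abs_mul, abs_of_pos (lt_trans one_pos hc1)]
    rw [habs, integral_const_mul, hnorm]
    rw [show c * (2 * l) = 2 * (c * l) by ring, hcl]

theorem stmt_7
    (f : Lp ℝ 1 (volume.restrict (Set.Ioo (0:ℝ) 1)))
    (l : ℝ) (hl0 : 0 < l) (hl1 : l < 1) (hf : ‖f‖ = 2 * l) :
    (∀ μ : ℝ, l < μ → μ < 1 →
      ∃ g₁ g₂ : Lp ℝ 1 (volume.restrict (Set.Ioo (0:ℝ) 1)),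
        g₁ ∈ Metric.closedBall 0 1 ∩ Metric.closedBall f 1 ∧
        g₂ ∈ Metric.closedBall 0 1 ∩ Metric.closedBall f 1 ∧
        ‖g₁ - g₂‖ = 2 * μ) ∧
    Metric.diam
      (Metric.closedBall (0 : Lp ℝ 1 (volume.restrict (Set.Ioo (0:ℝ) 1))) 1 ∩
        Metric.closedBall f 1) = 2 := by
  have hmain := stmt7_pair f l hl0 hl1 hf
  refine ⟨fun μ h1 h2 => hmain μ h1 h2, ?_⟩
  set S := Metric.closedBall (0 : Lp ℝ 1 (volume.restrict (Set.Ioo (0:ℝ) 1))) 1 ∩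
      Metric.closedBall f 1 with hS
  have hsub : S ⊆ Metric.closedBall 0 1 := Set.inter_subset_left
  have hbddS : Bornology.IsBounded S :=
    (Metric.isBounded_closedBall).subset hsub
  have hle : Metric.diam S ≤ 2 := by
    calc Metric.diam S ≤ Metric.diam (Metric.closedBall
          (0 : Lp ℝ 1 (volume.restrict (Set.Ioo (0:ℝ) 1))) 1) :=
        Metric.diam_mono hsub Metric.isBounded_closedBall
      _ ≤ 2 * 1 := Metric.diam_closedBall zero_le_one
      _ = 2 := by norm_num
  refine le_antisymm hle ?_
  refine le_of_forall_pos_le_add (fun ε hε => ?_)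
  set μ : ℝ := max ((l + 1) / 2) (1 - ε / 2) with hμdef
  have hlμ : l < μ := lt_of_lt_of_le (by linarith) (le_max_left _ _)
  have hμ1 : μ < 1 := max_lt (by linarith) (by linarith)
  obtain ⟨g₁, g₂, hg₁, hg₂, hgn⟩ := hmain μ hlμ hμ1
  have hd : dist g₁ g₂ ≤ Metric.diam S := Metric.dist_le_diam_of_mem hbddS hg₁ hg₂
  rw [dist_eq_norm, hgn] at hd
  have : 1 - ε / 2 ≤ μ := le_max_right _ _
  linarith
end

section
/- In L¹(0,1), for every ε > 0 there exist four open balls of radius 1 whose common intersection contains 0 and is contained in the ball B(0, ε). Explicitly, for 0 < δ < 1, letting χ(α,β) be the function equal to α on [0,1/2] and β on (1/2,1], the intersection of the open unit balls centered at χ(2-δ,0), χ(-2+δ,0), χ(0,2-δ), χ(0,-2+δ) contains 0 and is contained in the open ball of radius δ about 0. -/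
open MeasureTheory Set

noncomputable def mu01 : Measure ℝ := volume.restrict (Set.Ioo (0:ℝ) 1)

lemma mu01_Ioc_ne_top (a b : ℝ) : mu01 (Set.Ioc a b) ≠ ⊤ := by
  refine ne_top_of_le_ne_top ?_ (Measure.restrict_apply_le _ _)
  simp [measure_Ioc_lt_top.ne]

noncomputable def chi (a b : ℝ) : Lp ℝ 1 mu01 :=
  indicatorConstLp 1 measurableSet_Ioc (mu01_Ioc_ne_top 0 (1/2)) a +
    indicatorConstLp 1 measurableSet_Ioc (mu01_Ioc_ne_top (1/2) 1) b

lemma meas1 : mu01 (Ioc (0:ℝ) (1/2)) = ENNReal.ofReal (1/2) := by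
  rw [mu01, Measure.restrict_apply measurableSet_Ioc,
    inter_eq_self_of_subset_left (by intro x hx; exact ⟨hx.1, by linarith [hx.2]⟩ :
      Ioc (0:ℝ) (1/2) ⊆ Ioo 0 1)]
  simp [Real.volume_Ioc]

lemma meas2 : mu01 (Ioc (1/2:ℝ) 1) = ENNReal.ofReal (1/2) := by
  rw [mu01, Measure.restrict_apply measurableSet_Ioc]
  have : Ioc (1/2:ℝ) 1 ∩ Ioo 0 1 = Ioo (1/2) 1 := by
    ext x; constructor
    · rintro ⟨⟨h1, h2⟩, ⟨h3, h4⟩⟩; exact ⟨h1, h4⟩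
    · rintro ⟨h1, h2⟩; exact ⟨⟨h1, le_of_lt h2⟩, ⟨by linarith, h2⟩⟩
  rw [this]; simp [Real.volume_Ioo]; norm_num
  rw [one_div, ENNReal.ofReal_inv_of_pos (by norm_num)]; simp

lemma mu01_restrict_Ioc01 : mu01.restrict (Ioc (0:ℝ) 1) = mu01 := by
  rw [mu01, Measure.restrict_restrict measurableSet_Ioc,
    inter_eq_self_of_subset_right Ioo_subset_Ioc_self]

lemma chi_ae (a b : ℝ) :
    ⇑(chi a b) =ᵐ[mu01] fun x =>
      (Ioc (0:ℝ) (1/2)).indicator (fun _ => a) x + (Ioc (1/2:ℝ) 1).indicator (fun _ => b) x := by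
  filter_upwards [Lp.coeFn_add (indicatorConstLp 1 measurableSet_Ioc (mu01_Ioc_ne_top 0 (1/2)) a)
    (indicatorConstLp 1 measurableSet_Ioc (mu01_Ioc_ne_top (1/2) 1) b),
    indicatorConstLp_coeFn (p := 1) (μ := mu01) (hs := measurableSet_Ioc)
      (hμs := mu01_Ioc_ne_top 0 (1/2)) (c := a),
    indicatorConstLp_coeFn (p := 1) (μ := mu01) (hs := measurableSet_Ioc)
      (hμs := mu01_Ioc_ne_top (1/2) 1) (c := b)] with x h1 h2 h3
  simp only [chi, h1, Pi.add_apply, h2, h3]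

/-- Norm decomposition. -/
lemma norm_sub_chi (f : Lp ℝ 1 mu01) (a b : ℝ) :
    ‖f - chi a b‖ = (∫ x in Ioc (0:ℝ) (1/2), |f x - a| ∂mu01)
      + ∫ x in Ioc (1/2:ℝ) 1, |f x - b| ∂mu01 := by
  have hint : Integrable (⇑f) mu01 := L1.integrable_coeFn f
  have hae : ⇑(f - chi a b) =ᵐ[mu01] fun x => f x -
      ((Ioc (0:ℝ) (1/2)).indicator (fun _ => a) x + (Ioc (1/2:ℝ) 1).indicator (fun _ => b) x) := by
    filter_upwards [Lp.coeFn_sub f (chi a b), chi_ae a b] with x h1 h2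
    simp only [h1, Pi.sub_apply, h2]
  have h1 : ∀ᵐ x ∂(mu01.restrict (Ioc (0:ℝ) (1/2))), ‖(f - chi a b) x‖ = |f x - a| := by
    filter_upwards [ae_restrict_of_ae hae, ae_restrict_mem measurableSet_Ioc] with x hx hmem
    have hnot : x ∉ Ioc (1/2:ℝ) 1 := fun h => absurd hmem.2 (not_le.2 h.1)
    rw [hx, indicator_of_mem hmem, indicator_of_notMem hnot]
    simp [Real.norm_eq_abs]
  have h2 : ∀ᵐ x ∂(mu01.restrict (Ioc (1/2:ℝ) 1)), ‖(f - chi a b) x‖ = |f x - b| := by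
    filter_upwards [ae_restrict_of_ae hae, ae_restrict_mem measurableSet_Ioc] with x hx hmem
    have hnot : x ∉ Ioc (0:ℝ) (1/2) := fun h => absurd hmem.1 (not_lt.2 h.2)
    rw [hx, indicator_of_notMem hnot, indicator_of_mem hmem]
    simp [Real.norm_eq_abs]
  have hg : Integrable (⇑(f - chi a b)) mu01 := L1.integrable_coeFn _
  calc ‖f - chi a b‖ = ∫ x, ‖(f - chi a b) x‖ ∂mu01 := L1.norm_eq_integral_norm _
    _ = ∫ x in Ioc (0:ℝ) 1, ‖(f - chi a b) x‖ ∂mu01 := by rw [mu01_restrict_Ioc01]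
    _ = (∫ x in Ioc (0:ℝ) (1/2), ‖(f - chi a b) x‖ ∂mu01)
        + ∫ x in Ioc (1/2:ℝ) 1, ‖(f - chi a b) x‖ ∂mu01 := by
        rw [← Set.Ioc_union_Ioc_eq_Ioc (by norm_num : (0:ℝ) ≤ 1/2) (by norm_num : (1/2:ℝ) ≤ 1)]
        exact setIntegral_union (Set.Ioc_disjoint_Ioc_of_le le_rfl) measurableSet_Ioc
          (hg.norm.integrableOn) (hg.norm.integrableOn)
    _ = _ := by rw [integral_congr_ae h1, integral_congr_ae h2]

lemma chi_zero : chi 0 0 = 0 := by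
  rw [Lp.eq_zero_iff_ae_eq_zero]
  filter_upwards [chi_ae 0 0] with x hx
  simpa using hx

lemma norm_zero_sub_chi (a b : ℝ) :
    ‖(0 : Lp ℝ 1 mu01) - chi a b‖ = |a|/2 + |b|/2 := by
  rw [norm_sub_chi]
  have hz : ∀ s : Set ℝ, ∀ c : ℝ, (∫ x in s, |(0 : Lp ℝ 1 mu01) x - c| ∂mu01)
      = ∫ x in s, |c| ∂mu01 := by
    intro s c
    refine integral_congr_ae ?_
    filter_upwards [ae_restrict_of_ae (Lp.coeFn_zero ℝ 1 mu01)] with x hx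
    rw [hx]
    simp
  rw [hz, hz, setIntegral_const, setIntegral_const, measureReal_def, measureReal_def, meas1, meas2]
  rw [ENNReal.toReal_ofReal (by norm_num), smul_eq_mul, smul_eq_mul]
  ring

lemma norm_f_decomp (f : Lp ℝ 1 mu01) :
    ‖f‖ = (∫ x in Ioc (0:ℝ) (1/2), |f x| ∂mu01) + ∫ x in Ioc (1/2:ℝ) 1, |f x| ∂mu01 := by
  have := norm_sub_chi f 0 0
  rw [chi_zero, sub_zero] at this
  simpa using this

lemma half_lb (f : Lp ℝ 1 mu01) {s : Set ℝ}
    (hm : mu01 s = ENNReal.ofReal (1/2)) {c : ℝ} (hc : 0 ≤ c) :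
    c ≤ (∫ x in s, |f x - c| ∂mu01) + ∫ x in s, |f x - (-c)| ∂mu01 := by
  have hfi : IntegrableOn (⇑f) s mu01 := (L1.integrable_coeFn f).integrableOn
  have hμ : mu01 s < ⊤ := by rw [hm]; exact ENNReal.ofReal_lt_top
  have hi1 : Integrable (fun x => |f x - c|) (mu01.restrict s) :=
    (hfi.sub (integrableOn_const hμ.ne)).abs
  have hi2 : Integrable (fun x => |f x - (-c)|) (mu01.restrict s) :=
    (hfi.sub (integrableOn_const hμ.ne)).abs
  have : IsFiniteMeasure (mu01.restrict s) :=
    ⟨by rw [Measure.restrict_apply_univ, hm]; exact ENNReal.ofReal_lt_top⟩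
  have hpt : ∀ x, (2*c : ℝ) ≤ |f x - c| + |f x - (-c)| := by
    intro x
    calc (2*c : ℝ) = |(f x - (-c)) - (f x - c)| := by
          rw [abs_of_nonneg (by linarith)]; ring
      _ ≤ |f x - (-c)| + |f x - c| := abs_sub _ _
      _ = |f x - c| + |f x - (-c)| := add_comm _ _
  have hmono : (∫ _x in s, (2*c : ℝ) ∂mu01) ≤
      ∫ x in s, (|f x - c| + |f x - (-c)|) ∂mu01 :=
    integral_mono (integrable_const _) (hi1.add hi2) hpt
  rw [setIntegral_const, measureReal_def, hm, ENNReal.toReal_ofReal (by norm_num),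
    integral_add hi1 hi2, smul_eq_mul] at hmono
  linarith

theorem stmt_8 (δ : ℝ) (hδ0 : 0 < δ) (hδ1 : δ < 1) :
    (0 : Lp ℝ 1 mu01) ∈
      Metric.ball (chi (2 - δ) 0) 1 ∩ Metric.ball (chi (-2 + δ) 0) 1 ∩
        Metric.ball (chi 0 (2 - δ)) 1 ∩ Metric.ball (chi 0 (-2 + δ)) 1 ∧
    Metric.ball (chi (2 - δ) 0) 1 ∩ Metric.ball (chi (-2 + δ) 0) 1 ∩
        Metric.ball (chi 0 (2 - δ)) 1 ∩ Metric.ball (chi 0 (-2 + δ)) 1 ⊆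
      Metric.ball (0 : Lp ℝ 1 mu01) δ := by
  have hneg : (-2 + δ : ℝ) = -(2 - δ) := by ring
  constructor
  · have h2δ : |2 - δ| = 2 - δ := abs_of_pos (by linarith)
    have h2δ' : |(-2 : ℝ) + δ| = 2 - δ := by rw [abs_of_neg (by linarith)]; ring
    refine ⟨⟨⟨?_, ?_⟩, ?_⟩, ?_⟩ <;>
      · rw [Metric.mem_ball, dist_eq_norm, norm_zero_sub_chi]
        simp only [h2δ, h2δ', abs_zero]
        linarith
  · rintro f ⟨⟨⟨hb1, hb2⟩, hb3⟩, hb4⟩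
    rw [Metric.mem_ball, dist_eq_norm, norm_sub_chi] at hb1 hb2 hb3 hb4
    simp only [sub_zero, hneg] at hb1 hb2 hb3 hb4
    have k1 := half_lb f meas1 (c := 2 - δ) (by linarith)
    have k2 := half_lb f meas2 (c := 2 - δ) (by linarith)
    have hA : (∫ x in Ioc (0:ℝ) (1/2), |f x| ∂mu01) < δ/2 := by linarith
    have hB : (∫ x in Ioc (1/2:ℝ) 1, |f x| ∂mu01) < δ/2 := by linarith
    rw [Metric.mem_ball, dist_eq_norm, sub_zero, norm_f_decomp]
    linarith
end

section
/- Let X be a normed space in which the open balls of radius 1 form a subbase for the norm topology, let S ⊆ X be dense, and let T : S → S be a bijective step-isometry. Then T is continuous. -/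
private lemma floor_lt_one_iff' {a : ℝ} (ha : 0 ≤ a) : a < 1 ↔ ⌊a⌋ = 0 := by
  rw [Int.floor_eq_zero_iff, Set.mem_Ico]
  exact ⟨fun h => ⟨ha, h⟩, fun h => h.2⟩

/-- Key lemma: finite intersections of unit balls centered at points of the dense set `S`
containing `x` can be made small. -/
private lemma key_lemma {X : Type*} [NormedAddCommGroup X] [NormedSpace ℝ X]
    (hsub : TopologicalSpace.generateFrom {U : Set X | ∃ c : X, U = Metric.ball c 1} =
      (inferInstance : TopologicalSpace X))
    (S : Set X) (hS : Dense S) (x : X) {ε : ℝ} (hε : 0 < ε) :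
    ∃ D : Set S, D.Finite ∧ (∀ d ∈ D, ‖x - (d : X)‖ < 1) ∧
      ∀ y : X, (∀ d ∈ D, ‖y - (d : X)‖ < 1) → ‖y - x‖ < 2 * ε := by
  have B := TopologicalSpace.isTopologicalBasis_of_subbasis hsub.symm
  obtain ⟨v, hv, hxv, hvsub⟩ :=
    B.exists_subset_of_mem_open (Metric.mem_ball_self hε) Metric.isOpen_ball
  obtain ⟨f, ⟨hfin, hfs⟩, rfl⟩ := hv
  have hchoice : ∀ u ∈ f, ∃ d : S, ‖x - (d : X)‖ < 1 ∧
      ∀ y : X, ‖y - (d : X)‖ < 1 → (2:ℝ)⁻¹ • (x + y) ∈ u := by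
    intro u hu
    obtain ⟨c, rfl⟩ := hfs hu
    have hxc : ‖x - c‖ < 1 := by
      have hx : x ∈ Metric.ball c 1 := Set.mem_sInter.1 hxv _ hu
      simpa [Metric.mem_ball, dist_eq_norm] using hx
    have hδ : 0 < 1 - ‖x - c‖ := by linarith
    obtain ⟨d, hdS, hdb⟩ := hS.exists_mem_open Metric.isOpen_ball
      ⟨c, Metric.mem_ball_self hδ⟩
    have hdc : ‖d - c‖ < 1 - ‖x - c‖ := by
      simpa [Metric.mem_ball, dist_eq_norm] using hdb
    refine ⟨⟨d, hdS⟩, ?_, ?_⟩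
    · have h1 : x - d = (x - c) - (d - c) := by abel
      have h2 : ‖(x - c) - (d - c)‖ ≤ ‖x - c‖ + ‖d - c‖ := norm_sub_le _ _
      rw [h1]
      linarith
    · intro y hy
      have h3 : (y - d) + ((d - c) + (x - c)) = (x + y) - (2:ℝ) • c := by
        rw [two_smul]; abel
      have h4 : (2:ℝ)⁻¹ • (x + y) - c = (2:ℝ)⁻¹ • ((x + y) - (2:ℝ) • c) := by
        rw [smul_sub, smul_smul]
        norm_num
      have h5 : ‖(x + y) - (2:ℝ) • c‖ < 2 := by
        rw [← h3]
        calc ‖(y - d) + ((d - c) + (x - c))‖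
            ≤ ‖y - d‖ + ‖(d - c) + (x - c)‖ := norm_add_le _ _
          _ ≤ ‖y - d‖ + (‖d - c‖ + ‖x - c‖) := by
              have := norm_add_le (d - c) (x - c); linarith
          _ < 2 := by linarith
      have h6 : ‖(2:ℝ)⁻¹ • (x + y) - c‖ < 1 := by
        rw [h4, norm_smul]
        simp only [norm_inv, Real.norm_ofNat]
        linarith
      simpa [Metric.mem_ball, dist_eq_norm] using h6
  haveI : Nonempty X := ⟨0⟩
  haveI : Nonempty ↥S := (hS.nonempty).to_subtype
  choose! g hg1 hg2 using hchoice
  refine ⟨g '' f, ?_, ?_, ?_⟩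
  · exact hfin.image g
  · rintro d ⟨u, hu, rfl⟩
    exact hg1 u hu
  · intro y hy
    have hz : (2:ℝ)⁻¹ • (x + y) ∈ ⋂₀ f := by
      refine Set.mem_sInter.2 fun u hu => ?_
      exact hg2 u hu y (hy (g u) ⟨u, hu, rfl⟩)
    have hz2 : ‖(2:ℝ)⁻¹ • (x + y) - x‖ < ε := by
      have := hvsub hz
      simpa [Metric.mem_ball, dist_eq_norm] using this
    have h7 : y - x = (2:ℝ) • ((2:ℝ)⁻¹ • (x + y) - x) := by
      module
    rw [h7, norm_smul]
    simp only [Real.norm_ofNat]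
    linarith

theorem stmt_9 {X : Type*} [NormedAddCommGroup X] [NormedSpace ℝ X]
    (hsub : TopologicalSpace.generateFrom {U : Set X | ∃ c : X, U = Metric.ball c 1} =
      (inferInstance : TopologicalSpace X))
    (S : Set X) (hS : Dense S) (T : S → S) (hbij : Function.Bijective T)
    (hT : ∀ x y : S, ⌊‖(x : X) - (y : X)‖⌋ = ⌊‖(T x : X) - (T y : X)‖⌋) :
    Continuous T := by
  set E := Equiv.ofBijective T hbij with hE
  have hlt : ∀ a b : S, ‖(a : X) - (b : X)‖ < 1 ↔ ‖(T a : X) - (T b : X)‖ < 1 := by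
    intro a b
    rw [floor_lt_one_iff' (norm_nonneg _), floor_lt_one_iff' (norm_nonneg _), hT a b]
  have hcont : Continuous fun y : S => ((T y : X)) := by
    rw [continuous_iff_continuousAt]
    intro s
    rw [ContinuousAt, Metric.tendsto_nhds]
    intro ε hε
    obtain ⟨D, hDfin, hD1, hD2⟩ := key_lemma hsub S hS (T s : X) (half_pos hε)
    have hW : ∀ᶠ y : S in nhds s, ∀ d ∈ D, ‖(y : X) - ((E.symm d : S) : X)‖ < 1 := by
      have hopen : IsOpen {y : S | ∀ d ∈ D, ‖(y : X) - ((E.symm d : S) : X)‖ < 1} := by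
        have heq : {y : S | ∀ d ∈ D, ‖(y : X) - ((E.symm d : S) : X)‖ < 1}
            = ⋂ d ∈ D, (fun y : S => (y : X)) ⁻¹' Metric.ball ((E.symm d : S) : X) 1 := by
          ext y
          simp only [Set.mem_setOf_eq, Set.mem_iInter, Set.mem_preimage, Metric.mem_ball, dist_eq_norm]
        rw [heq]
        exact hDfin.isOpen_biInter
          (fun d _ => Metric.isOpen_ball.preimage continuous_subtype_val)
      have hmem : s ∈ {y : S | ∀ d ∈ D, ‖(y : X) - ((E.symm d : S) : X)‖ < 1} := by
        intro d hd
        have h1 := hD1 d hd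
        rw [hlt s (E.symm d)]
        have hTd : T (E.symm d) = d := E.apply_symm_apply d
        rw [hTd]
        exact h1
      exact hopen.mem_nhds hmem
    refine hW.mono ?_
    intro y hy
    rw [dist_eq_norm]
    have hball : ∀ d ∈ D, ‖(T y : X) - (d : X)‖ < 1 := by
      intro d hd
      have h := (hlt y (E.symm d)).1 (hy d hd)
      have hTd : T (E.symm d) = d := E.apply_symm_apply d
      rwa [hTd] at h
    have := hD2 (T y : X) hball
    linarith
  exact hcont.subtype_mk _
end

section
/- Let X be a reflexive Banach space, (xₙ) a sequence in X converging weakly to x, and B a closed ball not containing x. Then there exists an open ball D whose closure is disjoint from B and an N ∈ ℕ such that xₙ ∈ D for all n ≥ N. -/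
open NormedSpace Metric Filter Set TopologicalSpace Function

section Prelim

variable {Z : Type*} [NormedAddCommGroup Z] [NormedSpace ℝ Z]

/-- A functional vanishing on a closed subspace, positive at a point outside it. -/
lemma exists_dual_annihilator (Y : Submodule ℝ Z) (hY : IsClosed (Y : Set Z)) {z : Z}
    (hz : z ∉ Y) : ∃ f : Z →L[ℝ] ℝ, (∀ y ∈ Y, f y = 0) ∧ 0 < f z := by
  obtain ⟨f, u, hfa, hu⟩ := geometric_hahn_banach_closed_point Y.convex hY hz
  have hY0 : ∀ y ∈ Y, f y = 0 := by
    intro y hy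
    by_contra h
    have h2 := hfa _ (Y.smul_mem ((u + 1) / f y) hy)
    rw [map_smul, smul_eq_mul, div_mul_cancel₀ _ h] at h2
    linarith
  have h0 : (0 : ℝ) < u := by simpa using hfa 0 Y.zero_mem
  exact ⟨f, hY0, by linarith⟩

/-- If the dual of a normed space is separable, so is the space. -/
lemma separableSpace_of_dual_separable (h : SeparableSpace (StrongDual ℝ Z)) :
    SeparableSpace Z := by
  haveI : Nonempty (StrongDual ℝ Z) := ⟨0⟩
  set φ : ℕ → StrongDual ℝ Z := denseSeq (StrongDual ℝ Z) with hφdef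
  have hφ : DenseRange φ := denseRange_denseSeq _
  have hz : ∀ k : ℕ, ∃ z : Z, ‖z‖ ≤ 1 ∧ ‖φ k‖ / 2 ≤ (φ k) z := by
    intro k
    rcases eq_or_ne (φ k) 0 with h0 | h0
    · exact ⟨0, by simp [h0]⟩
    · by_contra hcon
      push_neg at hcon
      have hb : ∀ z : Z, ‖(φ k) z‖ ≤ (‖φ k‖ / 2) * ‖z‖ := by
        intro z
        rcases eq_or_ne z 0 with rfl | hz0
        · simp
        · have hn : (0:ℝ) < ‖z‖ := norm_pos_iff.2 hz0
          have hone : ‖‖z‖⁻¹ • z‖ ≤ 1 := by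
            rw [norm_smul, Real.norm_eq_abs, abs_of_pos (inv_pos.2 hn),
              inv_mul_cancel₀ hn.ne']
          have h1 := hcon (‖z‖⁻¹ • z) hone
          have h2 := hcon (-(‖z‖⁻¹ • z)) (by rwa [norm_neg])
          rw [map_neg] at h2
          rw [map_smul, smul_eq_mul] at h1 h2
          have hkey : ‖(φ k) z‖ * ‖z‖⁻¹ < ‖φ k‖ / 2 := by
            rcases le_or_gt 0 ((φ k) z) with hle | hlt
            · rw [Real.norm_eq_abs, abs_of_nonneg hle, mul_comm]; linarith [h1]
            · rw [Real.norm_eq_abs, abs_of_neg hlt, mul_comm]; linarith [h2]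
          have : ‖(φ k) z‖ = (‖(φ k) z‖ * ‖z‖⁻¹) * ‖z‖ := by field_simp
          rw [this]
          have h2' : (0:ℝ) ≤ ‖z‖ := hn.le
          nlinarith [hkey, hn]
      have hle := ContinuousLinearMap.opNorm_le_bound _ (by positivity :
        (0:ℝ) ≤ ‖φ k‖ / 2) hb
      have hnn : (0:ℝ) < ‖φ k‖ := norm_pos_iff.2 h0
      linarith
  choose z hz1 hz2 using hz
  set M := (Submodule.span ℝ (Set.range z)).topologicalClosure with hM
  have hMtop : M = ⊤ := by
    by_contra hne
    obtain ⟨z₀, hz₀⟩ : ∃ z₀, z₀ ∉ M := by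
      by_contra hall
      push_neg at hall
      exact hne (Submodule.eq_top_iff'.2 hall)
    obtain ⟨f, hf0, hfpos⟩ := exists_dual_annihilator M
      (Submodule.isClosed_topologicalClosure _) hz₀
    have hfne : f ≠ 0 := by
      intro hf
      rw [hf] at hfpos
      simp at hfpos
    have hfn : (0:ℝ) < ‖f‖ := norm_pos_iff.2 hfne
    obtain ⟨k, hk⟩ := Metric.denseRange_iff.1 hφ f (‖f‖ / 4) (by positivity)
    have hzkM : (z k : Z) ∈ M := Submodule.le_topologicalClosure _
      (Submodule.subset_span (Set.mem_range_self k))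
    have hfzk : f (z k) = 0 := hf0 _ hzkM
    have h1 : ‖φ k - f‖ < ‖f‖ / 4 := by
      rw [← dist_eq_norm]; rw [dist_comm]; exact hk
    have h2 : (φ k) (z k) = (φ k - f) (z k) := by simp [hfzk]
    have h3 : ‖(φ k - f) (z k)‖ ≤ ‖φ k - f‖ := by
      calc ‖(φ k - f) (z k)‖ ≤ ‖φ k - f‖ * ‖z k‖ := ContinuousLinearMap.le_opNorm _ _
        _ ≤ ‖φ k - f‖ * 1 := by
            exact mul_le_mul_of_nonneg_left (hz1 k) (norm_nonneg _)
        _ = ‖φ k - f‖ := mul_one _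
    have h4 : ‖φ k‖ ≥ ‖f‖ - ‖f‖ / 4 := by
      have hns : ‖φ k - (φ k - f)‖ ≤ ‖φ k‖ + ‖φ k - f‖ := norm_sub_le _ _
      have heq : φ k - (φ k - f) = f := by abel
      rw [heq] at hns
      linarith
    have h5 := hz2 k
    rw [h2] at h5
    have h6 : (φ k - f) (z k) ≤ ‖(φ k - f) (z k)‖ := le_abs_self _
    linarith
  have hsep : IsSeparable (M : Set Z) := by
    rw [hM, Submodule.topologicalClosure_coe]
    exact (((countable_range z).isSeparable).span).closure
  rw [hMtop] at hsep
  have : IsSeparable (univ : Set Z) := by simpa using hsep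
  exact isSeparable_univ_iff.1 this

end Prelim

section Refl

variable {X : Type*} [NormedAddCommGroup X] [NormedSpace ℝ X]

/-- A closed subspace of a reflexive space is reflexive. -/
lemma surjective_inclusion_subspace
    (hrefl : Surjective (inclusionInDoubleDual ℝ X)) (Y : Submodule ℝ X)
    (hY : IsClosed (Y : Set X)) : Surjective (inclusionInDoubleDual ℝ ↥Y) := by
  intro G
  set Rest : StrongDual ℝ X →L[ℝ] StrongDual ℝ ↥Y :=
    (ContinuousLinearMap.compL ℝ (↥Y) X ℝ).flip Y.subtypeL with hRestdef
  have hRest : ∀ (f : StrongDual ℝ X) (y : ↥Y), Rest f y = f y := fun f y => rfl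
  obtain ⟨x₀, hx₀⟩ := hrefl (G.comp Rest)
  have hx₀Y : x₀ ∈ Y := by
    by_contra hmem
    obtain ⟨f, hf0, hfpos⟩ := exists_dual_annihilator Y hY hmem
    have h2 : G.comp Rest f = 0 := by
      have hre : Rest f = 0 := by
        ext y
        simpa [hRest] using hf0 y y.2
      rw [ContinuousLinearMap.comp_apply, hre, map_zero]
    have h1 : inclusionInDoubleDual ℝ X x₀ f = f x₀ := rfl
    rw [hx₀, h2] at h1
    rw [← h1] at hfpos
    exact lt_irrefl _ hfpos
  refine ⟨⟨x₀, hx₀Y⟩, ?_⟩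
  ext g
  obtain ⟨gE, hext, -⟩ := exists_extension_norm_eq Y g
  have hre : Rest gE = g := by
    ext y
    simpa [hRest] using hext y
  have h3 : inclusionInDoubleDual ℝ X x₀ gE = G.comp Rest gE := by rw [hx₀]
  calc inclusionInDoubleDual ℝ ↥Y ⟨x₀, hx₀Y⟩ g = g ⟨x₀, hx₀Y⟩ := rfl
    _ = gE x₀ := (hext ⟨x₀, hx₀Y⟩).symm
    _ = inclusionInDoubleDual ℝ X x₀ gE := rfl
    _ = G (Rest gE) := h3
    _ = G g := by rw [hre]

end Refl


section Smooth

variable {Z : Type*} [NormedAddCommGroup Z] [NormedSpace ℝ Z]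

/-- The set of points admitting a norming functional close to a given functional is closed. -/
lemma isClosed_norming_set (f₀ : StrongDual ℝ Z) (α : ℝ) :
    IsClosed {y : Z | ∃ g : StrongDual ℝ Z, ‖g‖ ≤ 1 ∧ ‖g - f₀‖ ≤ α ∧ g y = ‖y‖} := by
  rw [← isSeqClosed_iff_isClosed]
  intro ys y hys hlim
  choose gs hgs1 hgs2 hgs3 using hys
  -- view the g's in the weak dual
  let K : Set (WeakDual ℝ Z) :=
    (WeakDual.toStrongDual ⁻¹' closedBall 0 1) ∩ (WeakDual.toStrongDual ⁻¹' closedBall f₀ α)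
  have hKc : IsCompact K :=
    (WeakDual.isCompact_closedBall (𝕜 := ℝ) (E := Z) 0 1).inter_right (WeakDual.isClosed_closedBall f₀ α)
  let Gs : ℕ → WeakDual ℝ Z := fun j => StrongDual.toWeakDual (gs j)
  have hmem : ∀ j, Gs j ∈ K := by
    intro j
    constructor
    · simp only [Set.mem_preimage, mem_closedBall_zero_iff]
      exact hgs1 j
    · simp only [Set.mem_preimage, mem_closedBall_iff_norm]
      exact hgs2 j
  have hle : Filter.map Gs Filter.atTop ≤ Filter.principal K :=
    Filter.le_principal_iff.2 (Filter.mem_map.2 (Filter.univ_mem' hmem))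
  obtain ⟨g, hgK, hcl⟩ := hKc.exists_clusterPt hle
  -- evaluation at y
  have hev : Continuous fun h : WeakDual ℝ Z => h y := WeakDual.eval_continuous y
  have htend : Filter.Tendsto (fun j => Gs j y) Filter.atTop (nhds ‖y‖) := by
    have hbound : ∀ j, ‖Gs j y - ‖y‖‖ ≤ 2 * ‖ys j - y‖ := by
      intro j
      have e1 : Gs j y - ‖y‖ = gs j (y - ys j) + (‖ys j‖ - ‖y‖) := by
        have : (gs j) y = (gs j) (y - ys j) + (gs j) (ys j) := by
          rw [map_sub]; ring
        simp only [Gs]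
        rw [StrongDual.coe_toWeakDual] at *
        rw [this, hgs3 j]
        ring
      rw [e1, Real.norm_eq_abs]
      have b1 : |(gs j) (y - ys j)| ≤ ‖y - ys j‖ := by
        calc |(gs j) (y - ys j)| ≤ ‖gs j‖ * ‖y - ys j‖ := (gs j).le_opNorm _
          _ ≤ 1 * ‖y - ys j‖ := by
              exact mul_le_mul_of_nonneg_right (hgs1 j) (norm_nonneg _)
          _ = ‖y - ys j‖ := one_mul _
      have b2 : |‖ys j‖ - ‖y‖| ≤ ‖ys j - y‖ := abs_norm_sub_norm_le _ _
      have b3 : ‖y - ys j‖ = ‖ys j - y‖ := norm_sub_rev _ _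
      calc |(gs j) (y - ys j) + (‖ys j‖ - ‖y‖)| ≤
            |(gs j) (y - ys j)| + |‖ys j‖ - ‖y‖| := abs_add_le _ _
        _ ≤ 2 * ‖ys j - y‖ := by rw [b3] at b1; linarith
    have h0 : Filter.Tendsto (fun j => 2 * ‖ys j - y‖) Filter.atTop (nhds 0) := by
      have := (hlim.sub_const y).norm
      simpa using this.const_mul 2
    have := squeeze_zero_norm hbound h0
    -- this : Tendsto (fun j => Gs j y - ‖y‖) atTop (nhds 0)
    have h2 := this.add_const ‖y‖
    simpa using h2
  have hclev : ClusterPt (g y) (Filter.map (fun j => Gs j y) Filter.atTop) := by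
    exact hcl.map hev.continuousAt (Filter.tendsto_map' Filter.tendsto_map)
  have hgy : g y = ‖y‖ := by
    exact eq_of_nhds_neBot (hclev.mono htend)
  refine ⟨WeakDual.toStrongDual g, ?_, ?_, hgy⟩
  · have := hgK.1
    simpa only [Set.mem_preimage, mem_closedBall_zero_iff] using this
  · have := hgK.2
    simpa only [Set.mem_preimage, mem_closedBall_iff_norm] using this

end Smooth

section SmoothMain

variable {Z : Type*} [NormedAddCommGroup Z] [NormedSpace ℝ Z]

set_option maxHeartbeats 1000000 in
/-- Existence of an approximately-smooth point of the norm near a given unit vector,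
in a Banach space with separable dual. -/
lemma exists_smooth_point [CompleteSpace Z] (hsep : SeparableSpace (StrongDual ℝ Z))
    (u₀ : Z) (hu₀ : ‖u₀‖ = 1) {κ η : ℝ} (hκ : 0 < κ) (hη : 0 < η) :
    ∃ (u : Z) (g : StrongDual ℝ Z) (δ : ℝ), 0 < δ ∧ ‖u - u₀‖ ≤ η ∧ ‖g‖ ≤ 1 ∧ g u = ‖u‖ ∧
      ∀ h : Z, ‖h‖ ≤ δ → ‖u + h‖ ≤ ‖u‖ + g h + κ * ‖h‖ := by
  have hα : (0:ℝ) < κ / 2 := by linarith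
  set α := κ / 2 with hαdef
  set η' := min η (1/2) with hη'def
  have hη'pos : 0 < η' := lt_min hη (by norm_num)
  have hη'le : η' ≤ η := min_le_left _ _
  have hη'half : η' ≤ 1/2 := min_le_right _ _
  haveI : Nonempty (StrongDual ℝ Z) := ⟨0⟩
  set f : ℕ → StrongDual ℝ Z := denseSeq (StrongDual ℝ Z) with hfdef
  have hf : DenseRange f := denseRange_denseSeq _
  set E : ℕ → Set Z := fun k => {y | ∃ g : StrongDual ℝ Z, ‖g‖ ≤ 1 ∧ ‖g - f k‖ ≤ α ∧ g y = ‖y‖}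
    with hEdef
  have hEc : ∀ k, IsClosed (E k) := fun k => isClosed_norming_set (f k) α
  have hSnorm : ∀ y : Z, y ∈ closedBall u₀ η' → (1:ℝ)/2 ≤ ‖y‖ := by
    intro y hy
    rw [mem_closedBall, dist_eq_norm] at hy
    have : ‖u₀‖ - ‖y‖ ≤ ‖y - u₀‖ := by
      have := norm_sub_le (y - u₀) y
      have h2 : y - u₀ - y = -u₀ := by abel
      rw [h2, norm_neg] at this
      linarith
    rw [hu₀] at this
    linarith [hη'half, hy]
  have hcov : ∀ y : Z, y ∈ closedBall u₀ η' → ∃ k, y ∈ E k := by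
    intro y hy
    have hy0 : y ≠ 0 := by
      intro h
      have := hSnorm y hy
      rw [h, norm_zero] at this
      linarith
    obtain ⟨gy, hgy1, hgy2⟩ := exists_dual_vector ℝ y (norm_ne_zero_iff.mpr hy0)
    obtain ⟨k, hk⟩ := Metric.denseRange_iff.1 hf gy α hα
    refine ⟨k, gy, le_of_eq hgy1, ?_, by exact_mod_cast hgy2⟩
    rw [← dist_eq_norm]
    exact hk.le
  -- Baire category on the closed ball
  set S : Set Z := closedBall u₀ η' with hSdef
  have hScl : IsClosed S := Metric.isClosed_closedBall
  haveI : Nonempty S := ⟨⟨u₀, mem_closedBall_self hη'pos.le⟩⟩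
  haveI : CompleteSpace S := hScl.completeSpace_coe
  have hcover : (⋃ k, (Subtype.val ⁻¹' E k : Set S)) = univ := by
    ext p
    simp only [Set.mem_iUnion, Set.mem_preimage, Set.mem_univ, iff_true]
    exact hcov p p.2
  obtain ⟨k, hkint⟩ := nonempty_interior_of_iUnion_of_closed
    (fun k => (hEc k).preimage continuous_subtype_val) hcover
  obtain ⟨p₀s, hp₀⟩ := hkint
  rw [mem_interior_iff_mem_nhds, Metric.mem_nhds_iff] at hp₀
  obtain ⟨ε, hε, hball⟩ := hp₀
  set p₀ : Z := (p₀s : Z) with hp₀def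
  have hp₀S : p₀ ∈ S := p₀s.2
  have hballZ : ∀ y : Z, y ∈ S → dist y p₀ < ε → y ∈ E k := by
    intro y hyS hyd
    have : (⟨y, hyS⟩ : S) ∈ ball p₀s ε := by
      rw [mem_ball, Subtype.dist_eq]
      exact hyd
    exact hball this
  -- the center of the good small ball
  set τ := min (ε / (4 * η')) (1/2) with hτdef
  have hτpos : 0 < τ := lt_min (by positivity) (by norm_num)
  have hτhalf : τ ≤ 1/2 := min_le_right _ _
  have hτε : τ * η' ≤ ε / 4 := by
    have h1 : τ ≤ ε / (4 * η') := min_le_left _ _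
    calc τ * η' ≤ (ε / (4 * η')) * η' := by
          exact mul_le_mul_of_nonneg_right h1 hη'pos.le
      _ = ε / 4 := by field_simp
  set u := u₀ + (1 - τ) • (p₀ - u₀) with hudef
  set ρ := min (τ * η') (ε / 4) with hρdef
  have hρpos : 0 < ρ := lt_min (by positivity) (by positivity)
  have hp₀n : ‖p₀ - u₀‖ ≤ η' := by
    have := hp₀S
    rwa [hSdef, mem_closedBall, dist_eq_norm] at this
  have huu₀ : ‖u - u₀‖ ≤ η' := by
    have : u - u₀ = (1 - τ) • (p₀ - u₀) := by rw [hudef]; abel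
    rw [this, norm_smul, Real.norm_eq_abs, abs_of_nonneg (by linarith : (0:ℝ) ≤ 1 - τ)]
    calc (1 - τ) * ‖p₀ - u₀‖ ≤ 1 * ‖p₀ - u₀‖ := by
          apply mul_le_mul_of_nonneg_right _ (norm_nonneg _)
          linarith
      _ = ‖p₀ - u₀‖ := one_mul _
      _ ≤ η' := hp₀n
  have hup₀ : ‖u - p₀‖ ≤ τ * η' := by
    have : u - p₀ = -(τ • (p₀ - u₀)) := by
      rw [hudef]
      rw [sub_smul, one_smul]
      abel
    rw [this, norm_neg, norm_smul, Real.norm_eq_abs, abs_of_pos hτpos]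
    exact mul_le_mul_of_nonneg_left hp₀n hτpos.le
  have hsub : ∀ y : Z, ‖y - u‖ < ρ → y ∈ E k := by
    intro y hy
    have h1 : ‖y - u₀‖ ≤ η' := by
      have : y - u₀ = (y - u) + (u - u₀) := by abel
      rw [this]
      calc ‖(y - u) + (u - u₀)‖ ≤ ‖y - u‖ + ‖u - u₀‖ := norm_add_le _ _
        _ ≤ ρ + (1 - τ) * ‖p₀ - u₀‖ := by
            have : u - u₀ = (1 - τ) • (p₀ - u₀) := by rw [hudef]; abel
            rw [this, norm_smul, Real.norm_eq_abs,
              abs_of_nonneg (by linarith : (0:ℝ) ≤ 1 - τ)]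
            linarith [hy]
        _ ≤ τ * η' + (1 - τ) * η' := by
            have h2 : ρ ≤ τ * η' := min_le_left _ _
            have h3 : (1 - τ) * ‖p₀ - u₀‖ ≤ (1 - τ) * η' :=
              mul_le_mul_of_nonneg_left hp₀n (by linarith)
            linarith
        _ = η' := by ring
    have h2 : dist y p₀ < ε := by
      rw [dist_eq_norm]
      have : y - p₀ = (y - u) + (u - p₀) := by abel
      rw [this]
      calc ‖(y - u) + (u - p₀)‖ ≤ ‖y - u‖ + ‖u - p₀‖ := norm_add_le _ _
        _ < ρ + τ * η' := by linarith [hup₀]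
        _ ≤ ε / 4 + ε / 4 := by
            have := min_le_right (τ * η') (ε / 4)
            linarith [hτε, this]
        _ < ε := by linarith
    exact hballZ y (by rw [hSdef, mem_closedBall, dist_eq_norm]; exact h1) h2
  -- u itself
  have hun : (1:ℝ)/2 ≤ ‖u‖ := hSnorm u (by rw [mem_closedBall, dist_eq_norm]; exact huu₀)
  have hu0 : u ≠ 0 := by
    intro h
    rw [h, norm_zero] at hun
    linarith
  obtain ⟨g, hg1, hg2⟩ := exists_dual_vector ℝ u (norm_ne_zero_iff.mpr hu0)
  have hg2' : g u = ‖u‖ := by exact_mod_cast hg2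
  -- the key directional estimate : ‖g - f k‖ ≤ α
  have hdir : ∀ z : Z, g z ≤ f k z + α * ‖z‖ := by
    intro z
    rcases eq_or_ne z 0 with rfl | hz0
    · simp
    · have hzn : (0:ℝ) < ‖z‖ := norm_pos_iff.2 hz0
      set t := ρ / 2 with htdef
      have ht : 0 < t := by positivity
      set z' := (t / ‖z‖) • z with hz'def
      have hz'n : ‖z'‖ = t := by
        rw [hz'def, norm_smul, Real.norm_eq_abs, abs_of_pos (by positivity)]
        field_simp
      have hy' : (u + z') ∈ E k := by
        apply hsub
        have : u + z' - u = z' := by abel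
        rw [this, hz'n]
        rw [hρdef] at *
        linarith
      obtain ⟨g', hg'1, hg'2, hg'3⟩ := hy'
      have e1 : g (u + z') ≤ ‖u + z'‖ := by
        calc g (u + z') ≤ |g (u + z')| := le_abs_self _
          _ ≤ ‖g‖ * ‖u + z'‖ := g.le_opNorm _
          _ = ‖u + z'‖ := by rw [hg1, one_mul]
      have e2 : g' u ≤ ‖u‖ := by
        calc g' u ≤ |g' u| := le_abs_self _
          _ ≤ ‖g'‖ * ‖u‖ := g'.le_opNorm _
          _ ≤ 1 * ‖u‖ := mul_le_mul_of_nonneg_right hg'1 (norm_nonneg _)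
          _ = ‖u‖ := one_mul _
      have e3 : g z' ≤ g' z' := by
        have h5 : g u + g z' ≤ g' u + g' z' := by
          have : ‖u + z'‖ = g' u + g' z' := by rw [← hg'3, map_add]
          rw [this] at e1
          rw [map_add] at e1
          exact e1
        rw [hg2'] at h5
        linarith
      have e4 : g' z' ≤ f k z' + α * ‖z'‖ := by
        have : g' z' - f k z' = (g' - f k) z' := by simp
        have h6 : (g' - f k) z' ≤ |(g' - f k) z'| := le_abs_self _
        have h7 : |(g' - f k) z'| ≤ ‖g' - f k‖ * ‖z'‖ := (g' - f k).le_opNorm _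
        have h8 : ‖g' - f k‖ * ‖z'‖ ≤ α * ‖z'‖ :=
          mul_le_mul_of_nonneg_right hg'2 (norm_nonneg _)
        have h9 : (g' - f k) z' = g' z' - f k z' := by simp
        linarith [h6, h7, h8, h9.symm.le, h9.le]
      -- scale back
      have e5 : g z' = (t / ‖z‖) * g z := by rw [hz'def, map_smul, smul_eq_mul]
      have e6 : f k z' = (t / ‖z‖) * f k z := by rw [hz'def, map_smul, smul_eq_mul]
      have e7 : (t / ‖z‖) * g z ≤ (t / ‖z‖) * f k z + α * t := by
        rw [← e5, ← e6, ← hz'n]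
        linarith [e3, e4]
      have hpos : 0 < t / ‖z‖ := by positivity
      have e8 : g z ≤ f k z + α * ‖z‖ := by
        have := mul_le_mul_of_nonneg_left e7 (le_of_lt (by positivity : (0:ℝ) < ‖z‖ / t))
        rw [mul_add] at this
        have l1 : ‖z‖ / t * (t / ‖z‖ * g z) = g z := by field_simp
        have l2 : ‖z‖ / t * (t / ‖z‖ * f k z) = f k z := by field_simp
        have l3 : ‖z‖ / t * (α * t) = α * ‖z‖ := by field_simp
        rw [l1, l2, l3] at this
        exact this
      exact e8
  have hgf : ‖g - f k‖ ≤ α := by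
    apply ContinuousLinearMap.opNorm_le_bound _ hα.le
    intro z
    have h1 := hdir z
    have h2 := hdir (-z)
    rw [map_neg, map_neg, norm_neg] at h2
    have e : (g - f k) z = g z - f k z := by simp
    rw [e, Real.norm_eq_abs, abs_le]
    constructor <;> linarith
  -- conclusion
  refine ⟨u, g, ρ / 4, by positivity, le_trans huu₀ hη'le, hg1.le, hg2', ?_⟩
  intro h hh
  have hy : (u + h) ∈ E k := by
    apply hsub
    have : u + h - u = h := by abel
    rw [this]
    linarith
  obtain ⟨gy, hgy1, hgy2, hgy3⟩ := hy
  have e1 : gy u ≤ ‖u‖ := by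
    calc gy u ≤ |gy u| := le_abs_self _
      _ ≤ ‖gy‖ * ‖u‖ := gy.le_opNorm _
      _ ≤ 1 * ‖u‖ := mul_le_mul_of_nonneg_right hgy1 (norm_nonneg _)
      _ = ‖u‖ := one_mul _
  have e2 : gy h - g h ≤ κ * ‖h‖ := by
    have h3 : gy h - g h = (gy - g) h := by simp
    have h4 : (gy - g) h ≤ |(gy - g) h| := le_abs_self _
    have h5 : |(gy - g) h| ≤ ‖gy - g‖ * ‖h‖ := (gy - g).le_opNorm _
    have h6 : ‖gy - g‖ ≤ 2 * α := by
      have : gy - g = (gy - f k) + (f k - g) := by abel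
      rw [this]
      calc ‖(gy - f k) + (f k - g)‖ ≤ ‖gy - f k‖ + ‖f k - g‖ := norm_add_le _ _
        _ ≤ α + α := by
            have := hgf
            rw [← norm_neg (f k - g)] at *
            have hng : ‖-(f k - g)‖ = ‖g - f k‖ := by rw [neg_sub]
            rw [hng]
            linarith [hgy2]
        _ = 2 * α := by ring
    have h7 : ‖gy - g‖ * ‖h‖ ≤ 2 * α * ‖h‖ :=
      mul_le_mul_of_nonneg_right h6 (norm_nonneg _)
    have h8 : 2 * α = κ := by rw [hαdef]; ring
    rw [h8] at h7
    linarith [h3.le, h3.symm.le]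
  have e3 : ‖u + h‖ = gy u + gy h := by rw [← hgy3, map_add]
  rw [e3]
  linarith

end SmoothMain


lemma bounded_of_weak_conv {X : Type*} [NormedAddCommGroup X] [NormedSpace ℝ X]
    (x_ : ℕ → X) (x : X)
    (hconv : ∀ f : X →L[ℝ] ℝ,
      Filter.Tendsto (fun n => f (x_ n)) Filter.atTop (nhds (f x))) :
    ∃ M : ℝ, 0 < M ∧ ∀ n, ‖x_ n‖ ≤ M := by
  have h : ∀ f : StrongDual ℝ X, ∃ C, ∀ n, ‖(inclusionInDoubleDual ℝ X (x_ n)) f‖ ≤ C := by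
    intro f
    obtain ⟨C, hC⟩ := ((hconv f).norm).bddAbove_range
    exact ⟨C, fun n => hC (Set.mem_range_self n)⟩
  obtain ⟨C', hC'⟩ := banach_steinhaus h
  refine ⟨max C' 0 + 1, by positivity, fun n => ?_⟩
  have hiso : ‖inclusionInDoubleDual ℝ X (x_ n)‖ = ‖x_ n‖ :=
    (inclusionInDoubleDualLi ℝ (E := X)).norm_map (x_ n)
  have := hC' n
  rw [hiso] at this
  have h2 : C' ≤ max C' 0 := le_max_left _ _
  linarith

set_option maxHeartbeats 1000000 in
theorem stmt_11 {X : Type*} [NormedAddCommGroup X] [NormedSpace ℝ X] [CompleteSpace X]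
    (hrefl : Function.Surjective (NormedSpace.inclusionInDoubleDual ℝ X))
    (x_ : ℕ → X) (x : X)
    (hconv : ∀ f : X →L[ℝ] ℝ,
      Filter.Tendsto (fun n => f (x_ n)) Filter.atTop (nhds (f x)))
    (w : X) (r : ℝ) (hx : x ∉ Metric.closedBall w r) :
    ∃ (c : X) (ρ : ℝ), 0 < ρ ∧
      Disjoint (closure (Metric.ball c ρ)) (Metric.closedBall w r) ∧
      ∃ N : ℕ, ∀ n ≥ N, x_ n ∈ Metric.ball c ρ := by
  classical
  obtain ⟨M₀, hM₀pos, hM₀⟩ := bounded_of_weak_conv x_ x hconv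
  rcases lt_or_ge r 0 with hr | hr
  · refine ⟨0, M₀ + 1, by linarith, ?_, 0, fun n _ => ?_⟩
    · rw [Metric.closedBall_eq_empty.2 hr]
      exact Set.disjoint_empty _
    · rw [mem_ball, dist_eq_norm, sub_zero]
      exact lt_of_le_of_lt (hM₀ n) (by linarith)
  · -- main case
    have hd : r < ‖x - w‖ := by
      have := hx
      rw [Metric.mem_closedBall, not_le, dist_eq_norm] at this
      exact this
    set d := ‖x - w‖ with hddef
    have hdpos : 0 < d := lt_of_le_of_lt hr hd
    set ε₀ := (d - r) / 4 with hε₀def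
    have hε₀pos : 0 < ε₀ := by rw [hε₀def]; linarith
    -- the separable closed subspace
    set R : Set X := insert x (insert w (Set.range x_)) with hRdef
    set Y : Submodule ℝ X := (Submodule.span ℝ R).topologicalClosure with hYdef
    have hYclosed : IsClosed (Y : Set X) := Submodule.isClosed_topologicalClosure _
    haveI : CompleteSpace ↥Y := hYclosed.completeSpace_coe
    have hmemR : ∀ v ∈ R, v ∈ Y := fun v hv =>
      Submodule.le_topologicalClosure _ (Submodule.subset_span hv)
    have hxY : x ∈ Y := hmemR x (Set.mem_insert _ _)
    have hwY : w ∈ Y := hmemR w (Set.mem_insert_of_mem _ (Set.mem_insert _ _))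
    have hxnY : ∀ n, x_ n ∈ Y := fun n => hmemR (x_ n)
      (Set.mem_insert_of_mem _ (Set.mem_insert_of_mem _ (Set.mem_range_self n)))
    -- separability of Y
    haveI hsepY : SeparableSpace ↥Y := by
      have hcR : R.Countable := ((Set.countable_range x_).insert w).insert x
      have hsep : IsSeparable (Y : Set X) := by
        rw [hYdef, Submodule.topologicalClosure_coe]
        exact (hcR.isSeparable.span).closure
      exact hsep.separableSpace
    have hsurjY : Surjective (inclusionInDoubleDual ℝ ↥Y) :=
      surjective_inclusion_subspace hrefl Y hYclosed
    haveI hsepYdd : SeparableSpace (StrongDual ℝ (StrongDual ℝ ↥Y)) :=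
      hsurjY.denseRange.separableSpace (inclusionInDoubleDual ℝ ↥Y).continuous
    have hsepDual : SeparableSpace (StrongDual ℝ ↥Y) := separableSpace_of_dual_separable (Z := StrongDual ℝ ↥Y) hsepYdd
    -- the unit vector u₀
    set xw : ↥Y := ⟨x - w, Y.sub_mem hxY hwY⟩ with hxwdef
    have hxwnorm : ‖xw‖ = d := by rw [Submodule.coe_norm]
    set u₀ : ↥Y := d⁻¹ • xw with hu₀def
    have hu₀ : ‖u₀‖ = 1 := by
      rw [hu₀def, norm_smul, Real.norm_eq_abs, abs_of_pos (inv_pos.2 hdpos), hxwnorm]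
      field_simp
    -- parameters
    set M := M₀ + ‖w‖ + 1 with hMdef
    have hMpos : 0 < M := by positivity
    have hMbound : ∀ n, ‖x_ n - w‖ ≤ M := by
      intro n
      calc ‖x_ n - w‖ ≤ ‖x_ n‖ + ‖w‖ := norm_sub_le _ _
        _ ≤ M₀ + ‖w‖ + 1 := by linarith [hM₀ n]
    set κ := ε₀ / M with hκdef
    have hκpos : 0 < κ := by positivity
    set η := min (ε₀ / (2 * d)) (1 / 2) with hηdef
    have hηpos : 0 < η := lt_min (by positivity) (by norm_num)
    have hηhalf : η ≤ 1 / 2 := min_le_right _ _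
    have hηd : 2 * η * d ≤ ε₀ := by
      have h1 : η ≤ ε₀ / (2 * d) := min_le_left _ _
      have h2 : 2 * η * d ≤ 2 * (ε₀ / (2 * d)) * d := by nlinarith
      calc 2 * η * d ≤ 2 * (ε₀ / (2 * d)) * d := h2
        _ = ε₀ := by field_simp
    obtain ⟨u, g, δ, hδpos, huu₀, hg1, hgu, hsmooth⟩ :=
      exists_smooth_point hsepDual u₀ hu₀ hκpos hηpos
    have hnu : 1 - η ≤ ‖u‖ := by
      have h1 : ‖u₀‖ - ‖u - u₀‖ ≤ ‖u‖ := by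
        have h2 : ‖u₀‖ ≤ ‖u‖ + ‖u - u₀‖ := by
          have h3 : u₀ = u - (u - u₀) := by abel
          calc ‖u₀‖ = ‖u - (u - u₀)‖ := by rw [← h3]
            _ ≤ ‖u‖ + ‖u - u₀‖ := norm_sub_le _ _
        linarith
      rw [hu₀] at h1
      linarith [huu₀]
    have hnuhalf : (1:ℝ)/2 ≤ ‖u‖ := by linarith [hηhalf]
    have hgu₀ : 1 - 2 * η ≤ g u₀ := by
      have h1 : g u - g u₀ ≤ ‖u - u₀‖ := by
        have h2 : g u - g u₀ = g (u - u₀) := by rw [map_sub]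
        rw [h2]
        calc g (u - u₀) ≤ |g (u - u₀)| := le_abs_self _
          _ ≤ ‖g‖ * ‖u - u₀‖ := g.le_opNorm _
          _ ≤ 1 * ‖u - u₀‖ := mul_le_mul_of_nonneg_right hg1 (norm_nonneg _)
          _ = ‖u - u₀‖ := one_mul _
      rw [hgu] at h1
      linarith [hnu, huu₀]
    -- extension to X
    obtain ⟨F, hFext, hFnorm⟩ := exists_extension_norm_eq Y g
    have hFxw : r + 3 * ε₀ ≤ F (x - w) := by
      have h1 : F (x - w) = g xw := hFext xw
      have h2 : g xw = d * g u₀ := by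
        have h3 : xw = d • u₀ := by
          rw [hu₀def, smul_smul, mul_inv_cancel₀ hdpos.ne', one_smul]
        rw [h3, map_smul, smul_eq_mul]
      have h4 : d * (1 - 2 * η) ≤ d * g u₀ :=
        mul_le_mul_of_nonneg_left hgu₀ hdpos.le
      have h5 : d * (1 - 2 * η) = d - 2 * η * d := by ring
      have h6 : d - ε₀ ≤ d - 2 * η * d := by linarith [hηd]
      have h7 : d - ε₀ = r + 3 * ε₀ := by rw [hε₀def]; ring
      rw [h1, h2]
      linarith
    -- the tail
    have htail : ∀ᶠ n in Filter.atTop, r + 2 * ε₀ ≤ F (x_ n) - F w := by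
      have h1 := (hconv F).eventually (eventually_ge_nhds
        (show F x - ε₀ < F x by linarith))
      filter_upwards [h1] with n hn
      have h2 : F x - F w = F (x - w) := by rw [map_sub]
      linarith [hFxw]
    obtain ⟨N, hN⟩ := Filter.eventually_atTop.1 htail
    -- geometry
    set T := max (M / δ) (2 * (r + ε₀ + 1)) with hTdef
    have hT2 : 2 * (r + ε₀ + 1) ≤ T := le_max_right _ _
    have hT1 : M / δ ≤ T := le_max_left _ _
    have hTpos : 0 < T := by
      have : (0:ℝ) < 2 * (r + ε₀ + 1) := by linarith
      linarith
    have hMT : M ≤ δ * T := by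
      have := mul_le_mul_of_nonneg_left hT1 hδpos.le
      calc M = δ * (M / δ) := by field_simp
        _ ≤ δ * T := this
    set c := w + T • (u : X) with hcdef
    set ρ := T * ‖u‖ - r - ε₀ / 2 with hρdef
    have hTu : r + ε₀ + 1 ≤ T * ‖u‖ := by
      have h1 : T / 2 ≤ T * ‖u‖ := by nlinarith [hnuhalf, hTpos]
      linarith [hT2]
    have hρpos : 0 < ρ := by rw [hρdef]; linarith
    have hdistcw : dist c w = T * ‖u‖ := by
      rw [hcdef, dist_eq_norm]
      have : w + T • (u : X) - w = T • (u : X) := by abel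
      rw [this, norm_smul, Real.norm_eq_abs, abs_of_pos hTpos, Submodule.coe_norm]
    refine ⟨c, ρ, hρpos, ?_, N, fun n hn => ?_⟩
    · apply Set.disjoint_left.2
      intro z hz1 hz2
      have hz1' : dist z c ≤ ρ := mem_closedBall.1 (closure_ball_subset_closedBall hz1)
      have hz2' : dist z w ≤ r := mem_closedBall.1 hz2
      have h1 : dist c w ≤ ρ + r := by
        calc dist c w ≤ dist c z + dist z w := dist_triangle _ _ _
          _ ≤ ρ + r := by rw [dist_comm c z]; linarith
      rw [hdistcw] at h1
      rw [hρdef] at h1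
      linarith
    · -- membership of the tail
      set yn : ↥Y := ⟨x_ n - w, Y.sub_mem (hxnY n) hwY⟩ with hyndef
      have hynnorm : ‖yn‖ ≤ M := by rw [Submodule.coe_norm]; exact hMbound n
      set hv : ↥Y := (-(T⁻¹)) • yn with hhvdef
      have hhvnorm : ‖hv‖ ≤ δ := by
        rw [hhvdef, norm_smul, Real.norm_eq_abs, abs_neg, abs_of_pos (inv_pos.2 hTpos)]
        rw [inv_mul_le_iff₀ hTpos]
        calc ‖yn‖ ≤ M := hynnorm
          _ ≤ δ * T := hMT
          _ = T * δ := mul_comm _ _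
      have hsm := hsmooth hv hhvnorm
      have hcoe : ((u + hv : ↥Y) : X) = (u : X) - T⁻¹ • (x_ n - w) := by
        rw [hhvdef, hyndef]
        push_cast
        rw [neg_smul]
        abel
      have hxnc : x_ n - c = -(T • ((u + hv : ↥Y) : X)) := by
        rw [hcoe, smul_sub, smul_smul, mul_inv_cancel₀ hTpos.ne', one_smul, hcdef]
        abel
      have hnorm1 : ‖x_ n - c‖ = T * ‖u + hv‖ := by
        rw [hxnc, norm_neg, norm_smul, Real.norm_eq_abs, abs_of_pos hTpos,
          Submodule.coe_norm]
      have hgyn : g yn = F (x_ n) - F w := by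
        have h1 : F ((yn : X)) = g yn := hFext yn
        have h2 : F ((yn : X)) = F (x_ n) - F w := by
          rw [hyndef]
          push_cast
          rw [map_sub]
        rw [← h1, h2]
      have hghv : g hv = -(T⁻¹ * (F (x_ n) - F w)) := by
        rw [hhvdef, map_smul, smul_eq_mul, hgyn]
        ring
      have hbound : ‖x_ n - c‖ ≤ T * ‖u‖ - (F (x_ n) - F w) + κ * ‖yn‖ := by
        rw [hnorm1]
        have h1 : T * ‖u + hv‖ ≤ T * (‖u‖ + g hv + κ * ‖hv‖) :=
          mul_le_mul_of_nonneg_left hsm hTpos.le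
        have h2 : T * g hv = -(F (x_ n) - F w) := by
          rw [hghv]
          field_simp
        have h3 : ‖hv‖ = T⁻¹ * ‖yn‖ := by
          rw [hhvdef, norm_smul, Real.norm_eq_abs, abs_neg,
            abs_of_pos (inv_pos.2 hTpos)]
        have h4 : T * (κ * ‖hv‖) = κ * ‖yn‖ := by
          rw [h3]
          field_simp
        calc T * ‖u + hv‖ ≤ T * (‖u‖ + g hv + κ * ‖hv‖) := h1
          _ = T * ‖u‖ + T * g hv + T * (κ * ‖hv‖) := by ring
          _ = T * ‖u‖ - (F (x_ n) - F w) + κ * ‖yn‖ := by rw [h2, h4]; ring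
      have hκM : κ * ‖yn‖ ≤ ε₀ := by
        have h1 : κ * ‖yn‖ ≤ κ * M := mul_le_mul_of_nonneg_left hynnorm hκpos.le
        have h2 : κ * M = ε₀ := by rw [hκdef]; field_simp
        linarith
      have hFn := hN n hn
      rw [mem_ball, dist_eq_norm]
      have : ‖x_ n - c‖ ≤ T * ‖u‖ - r - ε₀ := by linarith
      rw [hρdef]
      linarith
end

section
/- Let X be a reflexive Banach space, S ⊆ X dense, and T : S → S a bijective step-isometry. Suppose (xₙ) is a sequence in S converging weakly to x, and T(xₙ) converges weakly to x'. Then for every y ∈ S and m ∈ ℕ with ‖x - y‖ < m, we have ‖x' - T(y)‖ ≤ m. -/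
set_option maxHeartbeats 1600000
open Filter Topology

lemma nat_dep_choice' {P : ∀ k : ℕ, (Fin k → ℕ) → ℕ → Prop}
    (h : ∀ k (g : Fin k → ℕ), ∃ M, P k g M) :
    ∃ N : ℕ → ℕ, ∀ k, P k (fun i => N i) (N k) := by
  have pick : ∀ k (g : Fin k → ℕ), {M // P k g M} :=
    fun k g => ⟨(h k g).choose, (h k g).choose_spec⟩
  let F : ∀ k, Fin k → ℕ := fun k =>
    Nat.rec (motive := fun k => Fin k → ℕ) Fin.elim0
      (fun k ih => Fin.snoc ih (pick k ih).1) k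
  have hF : ∀ k, F (k+1) = Fin.snoc (F k) (pick k (F k)).1 := fun k => rfl
  refine ⟨fun k => F (k+1) (Fin.last k), fun k => ?_⟩
  have coh : ∀ k (i : Fin k), F k i = F (i.val+1) (Fin.last i.val) := by
    intro k
    induction k with
    | zero => exact fun i => i.elim0
    | succ k ih =>
      intro i
      induction i using Fin.lastCases with
      | last => simp [hF]
      | cast j =>
        rw [hF, Fin.snoc_castSucc]
        exact ih j
  have hNk : (fun i : Fin k => F (i.val+1) (Fin.last i.val)) = F k := by
    funext i; exact (coh k i).symm
  simp only []
  rw [hNk]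
  have hlast : F (k+1) (Fin.last k) = (pick k (F k)).1 := by
    rw [hF, Fin.snoc_last]
  rw [hlast]
  exact (pick k (F k)).2

section

variable {X : Type*} [NormedAddCommGroup X] [NormedSpace ℝ X]

lemma weak_null_bounded' (w : ℕ → X)
    (hw : ∀ f : X →L[ℝ] ℝ, Tendsto (fun n => f (w n)) atTop (nhds 0)) :
    ∃ C : ℝ, 1 ≤ C ∧ ∀ n, ‖w n‖ ≤ C := by
  have h : ∃ C', ∀ n, ‖NormedSpace.inclusionInDoubleDual ℝ X (w n)‖ ≤ C' := by
    apply banach_steinhaus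
    intro f
    have h2 : Tendsto (fun n => |f (w n)|) atTop (nhds 0) := by
      simpa using (hw f).abs
    obtain ⟨C, hC⟩ := h2.bddAbove_range
    exact ⟨C, fun n => by
      simpa [NormedSpace.dual_def] using hC (Set.mem_range_self n)⟩
  obtain ⟨C, hC⟩ := h
  refine ⟨max C 1, le_max_right _ _, fun n => ?_⟩
  have hn : ‖NormedSpace.inclusionInDoubleDual ℝ X (w n)‖ = ‖w n‖ :=
    (NormedSpace.inclusionInDoubleDualLi ℝ (E := X)).norm_map (w n)
  calc ‖w n‖ = _ := hn.symm
  _ ≤ C := hC n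
  _ ≤ max C 1 := le_max_left _ _

lemma directional_absorption' (w : ℕ → X)
    (hw : ∀ f : X →L[ℝ] ℝ, Tendsto (fun n => f (w n)) atTop (nhds 0))
    {C : ℝ} (hC : 1 ≤ C) (hwC : ∀ n, ‖w n‖ ≤ C)
    (ξ : X) (hξ : ‖ξ‖ = 1) {θ ε : ℝ} (hθ : 0 < θ) (hθ1 : θ ≤ 1)
    (hε : 0 < ε) (hε1 : ε ≤ 1) :
    ∃ (u : X) (R : ℝ), 0 < R ∧ ‖u - R • ξ‖ ≤ R * θ ∧
      ∃ᶠ n in atTop, ‖u - w n‖ < ‖u‖ + ε := by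
  by_contra hcon
  push_neg at hcon
  have hcon' : ∀ (u : X) (R : ℝ), 0 < R → ‖u - R • ξ‖ ≤ R * θ →
      ∀ᶠ n in atTop, ‖u‖ + ε ≤ ‖u - w n‖ := by
    intro u R hR hcone
    have := hcon u R hR hcone
    exact this
  have hC0 : (0:ℝ) < C := lt_of_lt_of_le one_pos hC
  obtain ⟨ρ, hρdef⟩ : ∃ ρ : ℝ, ρ = 8 * C / θ := ⟨_, rfl⟩
  have hρpos : 0 < ρ := by rw [hρdef]; positivity
  -- scaled hypothesis on the tube of radius 2C around ρ • ξ
  have hA : ∀ (z : X), ‖z‖ ≤ 2 * C → ∀ (τ : ℝ), 0 < τ →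
      ∀ᶠ n in atTop, ‖ρ • ξ - z‖ + τ * ε ≤ ‖ρ • ξ - z - τ • w n‖ := by

    intro z hz τ hτ
    obtain ⟨u, hudef⟩ : ∃ u : X, u = ρ • ξ - z := ⟨_, rfl⟩
    have hnr : ‖ρ • ξ‖ = ρ := by
      rw [norm_smul, hξ, mul_one, Real.norm_eq_abs, abs_of_pos hρpos]
    have hρ8 : 8 * C ≤ ρ := by
      rw [hρdef]
      rw [le_div_iff₀ hθ]
      nlinarith
    have hun : ρ - 2*C ≤ ‖u‖ := by
      have h1 : ‖ρ • ξ‖ - ‖z‖ ≤ ‖u‖ := by rw [hudef]; exact norm_sub_norm_le _ _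
      rw [hnr] at h1
      linarith
    have hu0 : 0 < ‖u‖ := by nlinarith
    have habs : |ρ - ‖u‖| ≤ 2*C := by
      have h1 : |‖ρ • ξ‖ - ‖u‖| ≤ ‖ρ • ξ - u‖ := abs_norm_sub_norm_le _ _
      have h2 : ρ • ξ - u = z := by rw [hudef]; abel
      rw [hnr, h2] at h1
      exact h1.trans hz
    have hcone1 : ‖u - ‖u‖ • ξ‖ ≤ ‖u‖ * θ := by
      have h1 : ‖u - ‖u‖ • ξ‖ ≤ ‖u - ρ • ξ‖ + ‖ρ • ξ - ‖u‖ • ξ‖ :=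
        norm_sub_le_norm_sub_add_norm_sub _ _ _
      have h2 : ‖u - ρ • ξ‖ = ‖z‖ := by rw [hudef]; rw [show ρ • ξ - z - ρ • ξ = -z by abel, norm_neg]
      have h3 : ‖ρ • ξ - ‖u‖ • ξ‖ = |ρ - ‖u‖| := by
        rw [← sub_smul, norm_smul, hξ, mul_one, Real.norm_eq_abs]
      have h4 : ‖u - ‖u‖ • ξ‖ ≤ 4 * C := by
        rw [h2, h3] at h1
        linarith
      have h5 : 4 * C ≤ ‖u‖ * θ := by
        have : (ρ - 2*C) * θ ≤ ‖u‖ * θ := by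
          apply mul_le_mul_of_nonneg_right _ hθ.le
          exact hun
        have hρθ : ρ * θ = 8 * C := by
          rw [hρdef]; field_simp
        nlinarith
      linarith
    have key := hcon' (τ⁻¹ • u) (τ⁻¹ * ‖u‖) (by positivity) ?_
    · filter_upwards [key] with n hn
      have hmul := mul_le_mul_of_nonneg_left hn hτ.le
      have e1 : τ * ‖τ⁻¹ • u‖ = ‖u‖ := by
        rw [norm_smul, Real.norm_eq_abs, abs_of_pos (by positivity : (0:ℝ) < τ⁻¹)]
        field_simp
      have e2 : τ * ‖τ⁻¹ • u - w n‖ = ‖u - τ • w n‖ := by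
        rw [show ‖u - τ • w n‖ = ‖τ • (τ⁻¹ • u - w n)‖ by
          rw [smul_sub, smul_inv_smul₀ hτ.ne']]
        rw [norm_smul, Real.norm_eq_abs, abs_of_pos hτ]
      calc ‖ρ • ξ - z‖ + τ * ε = τ * (‖τ⁻¹ • u‖ + ε) := by
            rw [mul_add, e1, ← hudef]
      _ ≤ τ * ‖τ⁻¹ • u - w n‖ := hmul
      _ = ‖ρ • ξ - z - τ • w n‖ := by rw [e2, hudef]
    · have : τ⁻¹ • u - (τ⁻¹ * ‖u‖) • ξ = τ⁻¹ • (u - ‖u‖ • ξ) := by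
        rw [smul_sub, mul_smul]
      rw [this, norm_smul, Real.norm_eq_abs, abs_of_pos (by positivity : (0:ℝ) < τ⁻¹)]
      rw [show τ⁻¹ * ‖u‖ * θ = τ⁻¹ * (‖u‖ * θ) by ring]
      exact mul_le_mul_of_nonneg_left hcone1 (by positivity)
  obtain ⟨δ, hδdef⟩ : ∃ δ : ℕ → ℝ, δ = fun k => ε / 2 ^ (k + 3) := ⟨_, rfl⟩
  have hδpos : ∀ k, 0 < δ k := by intro k; rw [hδdef]; positivity
  obtain ⟨t₀, ht₀def⟩ : ∃ t₀ : ℕ → ℝ, t₀ = fun k => δ k / (2 * C) := ⟨_, rfl⟩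
  have ht₀pos : ∀ k, 0 < t₀ k := by
    intro k; rw [ht₀def]; have := hδpos k; positivity
  have ht₀δ : ∀ k, 2 * C * t₀ k = δ k := by
    intro k; rw [ht₀def]; field_simp
  obtain ⟨q, hqdef⟩ : ∃ q : ℕ → ℕ, q = fun k => ⌈(2 * C * k) / δ k⌉₊ + 1 := ⟨_, rfl⟩
  have hqpos : ∀ k, 0 < q k := by intro k; rw [hqdef]; exact Nat.succ_pos _
  have hqprop : ∀ k : ℕ, (k : ℝ) / q k ≤ δ k / (2 * C) := by

    intro k
    have hδpos : 0 < δ k := by rw [hδdef]; positivity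
    have hq1 : (2 * C * k) / δ k ≤ (q k : ℝ) := by
      rw [hqdef]
      push_cast
      exact (Nat.le_ceil _).trans (by linarith [Nat.le_ceil ((2 * C * k) / δ k)])
    have hqpos : (0:ℝ) < q k := by rw [hqdef]; positivity
    rw [div_le_div_iff₀ hqpos (by positivity)]
    have := (div_le_iff₀ hδpos).mp hq1
    nlinarith
  have hstep : ∀ (k : ℕ) (g : Fin k → ℕ), ∃ M : ℕ,
      k ≤ M ∧ ∀ j : Fin k → ℕ, (∑ i, j i ≤ q k) →
      ‖ρ • ξ - ∑ i, ((j i : ℝ) / q k) • w (g i)‖ + t₀ k * ε ≤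
        ‖ρ • ξ - ∑ i, ((j i : ℝ) / q k) • w (g i) - t₀ k • w M‖ := by

    intro k g
    classical
    set Jset : Finset (Fin k → ℕ) :=
      (Fintype.piFinset fun _ : Fin k => Finset.range (q k + 1)).filter
        (fun j => ∑ i, j i ≤ q k) with hJdef
    have hev : ∀ᶠ n in atTop, ∀ j ∈ Jset,
        ‖ρ • ξ - ∑ i, ((j i : ℝ) / q k) • w (g i)‖ + t₀ k * ε ≤
          ‖ρ • ξ - ∑ i, ((j i : ℝ) / q k) • w (g i) - t₀ k • w n‖ := by
      rw [Filter.eventually_all_finset]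
      intro j hj
      have hjsum : ∑ i, j i ≤ q k := (Finset.mem_filter.mp hj).2
      have hz : ‖∑ i, ((j i : ℝ) / q k) • w (g i)‖ ≤ 2 * C := by
        calc ‖∑ i, ((j i : ℝ) / q k) • w (g i)‖
            ≤ ∑ i, ‖((j i : ℝ) / q k) • w (g i)‖ := norm_sum_le _ _
        _ ≤ ∑ i, ((j i : ℝ) / q k) * C := by
            apply Finset.sum_le_sum
            intro i _
            rw [norm_smul, Real.norm_eq_abs, abs_of_nonneg (by positivity)]
            exact mul_le_mul_of_nonneg_left (hwC _) (by positivity)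
        _ = ((∑ i, (j i : ℝ)) / q k) * C := by
            rw [Finset.sum_div, Finset.sum_mul]
        _ ≤ 1 * C := by
            apply mul_le_mul_of_nonneg_right _ hC0.le
            rw [div_le_one (by exact_mod_cast hqpos k)]
            exact_mod_cast hjsum
        _ ≤ 2 * C := by linarith
      have := hA _ hz (t₀ k) (ht₀pos k)
      filter_upwards [this] with n hn
      exact hn
    obtain ⟨M, hM1, hM2⟩ := ((eventually_ge_atTop k).and hev).exists
    refine ⟨M, hM1, fun j hjsum => ?_⟩
    have hjmem : j ∈ Jset := by
      rw [hJdef, Finset.mem_filter]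
      refine ⟨?_, hjsum⟩
      rw [Fintype.mem_piFinset]
      intro i
      rw [Finset.mem_range]
      have : j i ≤ ∑ i', j i' := Finset.single_le_sum (fun _ _ => Nat.zero_le _) (Finset.mem_univ i)
      omega
    exact hM2 j hjmem
  obtain ⟨N, hN⟩ := nat_dep_choice' hstep
  have hNk : ∀ k, k ≤ N k := fun k => (hN k).1
  have hNsel : ∀ (k : ℕ) (j : Fin k → ℕ), (∑ i, j i ≤ q k) →
      ‖ρ • ξ - ∑ i, ((j i : ℝ) / q k) • w (N i)‖ + t₀ k * ε ≤
        ‖(ρ • ξ - ∑ i, ((j i : ℝ) / q k) • w (N i)) - t₀ k • w (N k)‖ := by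
    intro k j hj
    exact (hN k).2 j hj
  have hINV : ∀ (k : ℕ) (c : Fin k → ℝ), (∀ i, 0 ≤ c i) → (∑ i, c i) ≤ 1 →
      ρ + ε * (∑ i, c i) - (∑ i : Fin k, δ i) ≤
        ‖ρ • ξ - ∑ i, c i • w (N i)‖ := by

    intro k
    induction k with
    | zero =>
      intro c _ _
      simp only [Finset.univ_eq_empty, Finset.sum_empty, sub_zero, mul_zero]
      rw [norm_smul, hξ, mul_one, Real.norm_eq_abs, abs_of_pos hρpos]
      linarith
    | succ k ih =>
      intro c hc hcsum
      set t : ℝ := c (Fin.last k) with htdef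
      set c' : Fin k → ℝ := fun i => c i.castSucc with hc'def
      have ht0 : 0 ≤ t := hc _
      have hsplit : (∑ i, c i) = (∑ i, c' i) + t := Fin.sum_univ_castSucc c
      set S : ℝ := ∑ i, c' i with hSdef
      have hS0 : 0 ≤ S := Finset.sum_nonneg (fun i _ => hc _)
      have hS1 : S + t ≤ 1 := by rw [← hsplit]; exact hcsum
      have hvsplit : (∑ i, c i • w (N i)) =
          (∑ i : Fin k, c' i • w (N i)) + t • w (N k) := by
        rw [Fin.sum_univ_castSucc (fun i => c i • w (N i))]
        simp [hc'def, htdef]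
      have hδsplit : (∑ i : Fin (k+1), δ i) = (∑ i : Fin k, δ i) + δ k := by
        rw [Fin.sum_univ_castSucc (fun i : Fin (k+1) => δ i)]
        simp
      set A : X := ρ • ξ - ∑ i : Fin k, c' i • w (N i) with hAdef
      have hgoal : ρ • ξ - ∑ i, c i • w (N i) = A - t • w (N k) := by
        rw [hAdef, hvsplit]; abel
      rw [hgoal, hδsplit, hsplit]
      have ihA : ρ + ε * S - (∑ i : Fin k, δ i) ≤ ‖A‖ :=
        ih c' (fun i => hc _) (by rw [← hSdef] at *; linarith)
      rcases le_or_gt t (t₀ k) with ht | ht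
      · -- small coefficient case
        have h1 : ‖A‖ - t * C ≤ ‖A - t • w (N k)‖ := by
          have := norm_sub_norm_le A (t • w (N k))
          have hn : ‖t • w (N k)‖ ≤ t * C := by
            rw [norm_smul, Real.norm_eq_abs, abs_of_nonneg ht0]
            exact mul_le_mul_of_nonneg_left (hwC _) ht0
          linarith
        have h2 : ε * t + t * C ≤ δ k := by
          have : ε * t + t * C ≤ 2 * C * t := by nlinarith
          have h3 : 2 * C * t ≤ 2 * C * t₀ k := by nlinarith
          rw [ht₀δ k] at h3
          linarith
        linarith [ihA, h1]
      · -- main case: use the grid and the slope trick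
        have htpos : 0 < t := lt_trans (ht₀pos k) ht
        have hc'0 : ∀ i, 0 ≤ c' i := fun i => hc _
        have hq0 : (0:ℝ) < q k := by exact_mod_cast hqpos k
        set j : Fin k → ℕ := fun i => ⌊c' i * q k⌋₊ with hjdef
        have hjle : ∀ i, (j i : ℝ) ≤ c' i * q k := fun i =>
          Nat.floor_le (mul_nonneg (hc'0 i) hq0.le)
        have hjgt : ∀ i, c' i * q k < j i + 1 := fun i => Nat.lt_floor_add_one _
        set μ : Fin k → ℝ := fun i => (j i : ℝ) / q k with hμdef
        have hμ0 : ∀ i, 0 ≤ μ i := fun i => by positivity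
        have hμle : ∀ i, μ i ≤ c' i := fun i => by
          rw [hμdef, div_le_iff₀ hq0]; exact hjle i
        have hdiff : ∀ i, c' i - μ i ≤ 1 / q k := fun i => by
          rw [hμdef]
          rw [sub_le_iff_le_add, ← add_div, le_div_iff₀ hq0]
          have := hjgt i
          push_cast
          linarith
        have hjsum : ∑ i, j i ≤ q k := by
          have hr : ((∑ i, j i : ℕ) : ℝ) ≤ (q k : ℝ) := by
            push_cast
            calc (∑ i, (j i:ℝ)) ≤ ∑ i, c' i * q k := Finset.sum_le_sum (fun i _ => hjle i)
            _ = S * q k := by rw [hSdef, Finset.sum_mul]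
            _ ≤ 1 * q k := by nlinarith
            _ = q k := one_mul _
          exact_mod_cast hr
        set B : X := ρ • ξ - ∑ i : Fin k, μ i • w (N i) with hBdef
        have hsel : ‖B‖ + t₀ k * ε ≤ ‖B - t₀ k • w (N k)‖ := hNsel k j hjsum
        set W : X := w (N k) with hWdef
        -- slope trick
        have hslope : ‖B‖ + t * ε ≤ ‖B - t • W‖ := by
          have hid : B - t₀ k • W = (t₀ k / t) • (B - t • W) + (1 - t₀ k / t) • B := by
            rw [smul_sub, sub_smul, one_smul, smul_smul]
            rw [div_mul_cancel₀ _ htpos.ne']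
            abel
          have hfrac0 : 0 ≤ t₀ k / t := div_nonneg (ht₀pos k).le htpos.le
          have hfrac1 : t₀ k / t ≤ 1 := (div_le_one htpos).mpr ht.le
          have hnorm : ‖B - t₀ k • W‖ ≤ (t₀ k / t) * ‖B - t • W‖ + (1 - t₀ k / t) * ‖B‖ := by
            rw [hid]
            refine (norm_add_le _ _).trans ?_
            rw [norm_smul, norm_smul, Real.norm_eq_abs, Real.norm_eq_abs]
            rw [abs_of_nonneg hfrac0, abs_of_nonneg (by linarith)]
          have hfrac : 0 < t₀ k / t := div_pos (ht₀pos k) htpos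
          have hkey : (t₀ k / t) * (‖B‖ + t * ε) ≤ (t₀ k / t) * ‖B - t • W‖ := by
            have hexp : (t₀ k / t) * (‖B‖ + t * ε) = (t₀ k / t) * ‖B‖ + t₀ k * ε := by
              field_simp
            rw [hexp]
            nlinarith [hsel, hnorm]
          exact le_of_mul_le_mul_left hkey hfrac
        -- transfer from B to A
        have hBAeq : B - A = ∑ i : Fin k, (c' i - μ i) • w (N i) := by
          have h1 : B - A = (∑ i : Fin k, c' i • w (N i)) - (∑ i : Fin k, μ i • w (N i)) := by
            rw [hBdef, hAdef]; abel
          rw [h1, ← Finset.sum_sub_distrib]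
          exact Finset.sum_congr rfl (fun i _ => (sub_smul _ _ _).symm)
        have hBA : ‖B - A‖ ≤ δ k / 2 := by
          rw [hBAeq]
          have h2 : ‖∑ i : Fin k, (c' i - μ i) • w (N i)‖ ≤ ∑ i : Fin k, (1 / (q k : ℝ)) * C := by
            refine (norm_sum_le _ _).trans (Finset.sum_le_sum (fun i _ => ?_))
            rw [norm_smul, Real.norm_eq_abs, abs_of_nonneg (by linarith [hμle i])]
            have h3 : ‖w (N i)‖ ≤ C := hwC _
            have h4 : c' i - μ i ≤ 1 / (q k : ℝ) := hdiff i
            have h5 : 0 ≤ c' i - μ i := by linarith [hμle i]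
            exact mul_le_mul h4 h3 (norm_nonneg _) (by positivity)
          have h6 : (∑ _i : Fin k, (1 / (q k : ℝ)) * C) = ((k : ℝ) / q k) * C := by
            rw [Finset.sum_const, Finset.card_univ, Fintype.card_fin, nsmul_eq_mul]
            ring
          rw [h6] at h2
          have h7 : ((k : ℝ) / q k) * C ≤ (δ k / (2 * C)) * C :=
            mul_le_mul_of_nonneg_right (hqprop k) hC0.le
          have h8 : (δ k / (2 * C)) * C = δ k / 2 := by field_simp
          linarith
        have htrans : ‖B - t • W‖ - ‖B - A‖ ≤ ‖A - t • W‖ := by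
          have h9 : (B - t • W) - (B - A) = A - t • W := by abel
          have := norm_sub_norm_le (B - t • W) (B - A)
          rw [h9] at this
          exact this
        have ihB : ρ + ε * (∑ i, μ i) - (∑ i : Fin k, δ i) ≤ ‖B‖ :=
          ih μ hμ0 (le_trans (Finset.sum_le_sum (fun i _ => hμle i)) (by rw [← hSdef]; linarith))
        have hμsum : S - (k : ℝ) / q k ≤ ∑ i, μ i := by
          have h10 : ∑ i, (c' i - μ i) ≤ ∑ _i : Fin k, 1 / (q k : ℝ) :=
            Finset.sum_le_sum (fun i _ => hdiff i)
          rw [Finset.sum_sub_distrib] at h10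
          have h11 : (∑ _i : Fin k, 1 / (q k : ℝ)) = (k : ℝ) / q k := by
            rw [Finset.sum_const, Finset.card_univ, Fintype.card_fin, nsmul_eq_mul]
            ring
          rw [h11] at h10
          rw [hSdef]
          linarith
        have hkq : (k : ℝ) / q k ≤ δ k / (2 * C) := hqprop k
        -- ε * (k/q) ≤ δ k / 2
        have hkq0 : 0 ≤ (k : ℝ) / q k := by positivity
        have hfin : ε * ((k : ℝ) / q k) ≤ δ k / 2 := by
          have h12 : ε * ((k : ℝ) / q k) ≤ 1 * (δ k / (2 * C)) :=
            mul_le_mul hε1 hkq hkq0 zero_le_one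
          have h13 : δ k / (2 * C) ≤ δ k / 2 := by
            apply div_le_div_of_nonneg_left (hδpos k).le (by norm_num)
            linarith
          linarith
        have hμS : ε * (∑ i, μ i) ≥ ε * S - δ k / 2 := by
          have h14 : ε * (S - (k : ℝ) / q k) ≤ ε * (∑ i, μ i) :=
            mul_le_mul_of_nonneg_left hμsum hε.le
          nlinarith
        linarith [hslope, htrans, ihB, hBA, hμS]

  classical
  -- the sum of the slops is at most ε/4
  have hδsum : ∀ K : ℕ, (∑ i : Fin K, δ i) ≤ ε / 4 := by
    intro K
    have h1 : ∀ i : ℕ, δ i = (ε/8) * (1/2)^i := by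
      intro i
      have h0 : δ i = ε / 2 ^ (i + 3) := by rw [hδdef]
      rw [h0, pow_add, show (2:ℝ)^3 = 8 by norm_num, one_div, inv_pow,
        div_eq_mul_inv, div_eq_mul_inv, mul_inv]
      ring
    calc (∑ i : Fin K, δ i) = (ε/8) * ∑ i : Fin K, (1/2:ℝ)^(i:ℕ) := by
          rw [Finset.mul_sum]
          exact Finset.sum_congr rfl (fun i _ => h1 i)
    _ ≤ (ε/8) * 2 := by
        have h2 : ∑ i : Fin K, (1/2:ℝ)^(i:ℕ) ≤ 2 := by
          rw [Fin.sum_univ_eq_sum_range (fun i => (1/2:ℝ)^i) K]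
          have := geom_sum_eq (by norm_num : (1/2:ℝ) ≠ 1) K
          rw [this]
          have h3 : (0:ℝ) ≤ (1/2:ℝ)^K := by positivity
          have h4 : ((1/2:ℝ)^K - 1)/((1/2:ℝ) - 1) = 2*(1 - (1/2:ℝ)^K) := by ring
          rw [h4]; linarith
        nlinarith
    _ ≤ ε / 4 := by linarith
  -- Finset ℕ version of the invariant
  have hINV' : ∀ (s : Finset ℕ) (b : ℕ → ℝ), (∀ i, 0 ≤ b i) →
      (∑ i ∈ s, b i) = 1 → ρ + ε * (3/4) ≤ ‖ρ • ξ - ∑ i ∈ s, b i • w (N i)‖ := by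
    intro s b hb0 hb1
    set K : ℕ := (s.sup id) + 1 with hKdef
    have hsK : s ⊆ Finset.range K := by
      intro i hi
      rw [Finset.mem_range, hKdef]
      exact Nat.lt_succ_of_le (Finset.le_sup (f := id) hi)
    set c : Fin K → ℝ := fun i => if (i:ℕ) ∈ s then b i else 0 with hcdef
    have hc0 : ∀ i, 0 ≤ c i := by
      intro i; rw [hcdef]; dsimp only
      split
      · exact hb0 _
      · exact le_rfl
    have hcsum : (∑ i, c i) = 1 := by
      have e1 : (∑ i, c i) = ∑ i ∈ Finset.range K, (if i ∈ s then b i else 0) :=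
        Fin.sum_univ_eq_sum_range (fun i => if i ∈ s then b i else 0) K
      rw [hcdef]
      rw [e1, Finset.sum_ite_mem, Finset.inter_eq_right.mpr hsK, hb1]
    have hvec : (∑ i, c i • w (N i)) = ∑ i ∈ s, b i • w (N i) := by
      have e1 : (∑ i, c i • w (N i)) =
          ∑ i ∈ Finset.range K, (if i ∈ s then b i • w (N i) else 0) := by
        rw [← Fin.sum_univ_eq_sum_range (fun i => if i ∈ s then b i • w (N i) else 0) K]
        refine Finset.sum_congr rfl (fun i _ => ?_)
        rw [hcdef]
        dsimp only
        split
        · rfl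
        · rw [zero_smul]
      rw [e1, Finset.sum_ite_mem, Finset.inter_eq_right.mpr hsK]
    have := hINV K c hc0 (le_of_eq hcsum)
    rw [hcsum, hvec, mul_one] at this
    have h5 := hδsum K
    linarith
  -- every convex combination has norm at least ε/2
  have hhull : ∀ z ∈ convexHull ℝ (Set.range (fun k => w (N k))), ε/2 ≤ ‖z‖ := by
    intro z hz
    rw [convexHull_eq] at hz
    obtain ⟨ι, tt, a, v, ha0, ha1, hvs, hcm⟩ := hz
    have hzeq : z = ∑ i ∈ tt, a i • v i := by
      rw [← hcm, Finset.centerMass_eq_of_sum_1 _ _ ha1]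
    set φ : ι → ℕ := fun i =>
      if h : ∃ k, w (N k) = v i then h.choose else 0 with hφdef
    have hφspec : ∀ i ∈ tt, w (N (φ i)) = v i := by
      intro i hi
      obtain ⟨k, hk⟩ := hvs i hi
      have hex : ∃ k, w (N k) = v i := ⟨k, hk⟩
      rw [hφdef]
      dsimp only
      rw [dif_pos hex]
      exact hex.choose_spec
    set s' : Finset ℕ := tt.image φ with hs'def
    set b : ℕ → ℝ := fun n => ∑ i ∈ tt.filter (fun i => φ i = n), a i with hbdef
    have hb0 : ∀ n, 0 ≤ b n := by
      intro n
      exact Finset.sum_nonneg (fun i hi => ha0 i (Finset.mem_filter.mp hi).1)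
    have hmaps : ∀ i ∈ tt, φ i ∈ s' := fun i hi => Finset.mem_image_of_mem φ hi
    have hb1 : (∑ n ∈ s', b n) = 1 := by
      rw [hbdef, Finset.sum_fiberwise_of_maps_to hmaps, ha1]
    have hbv : (∑ n ∈ s', b n • w (N n)) = z := by
      have e2 : ∀ n ∈ s', b n • w (N n) =
          ∑ i ∈ tt.filter (fun i => φ i = n), a i • v i := by
        intro n _
        rw [hbdef]
        rw [Finset.sum_smul]
        refine Finset.sum_congr rfl (fun i hi => ?_)
        obtain ⟨hit, hiφ⟩ := Finset.mem_filter.mp hi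
        rw [← hiφ, hφspec i hit]
      rw [Finset.sum_congr rfl e2, Finset.sum_fiberwise_of_maps_to hmaps, hzeq]
    have h6 := hINV' s' b hb0 hb1
    rw [hbv] at h6
    have h7 : ‖ρ • ξ - z‖ ≤ ρ + ‖z‖ := by
      have := norm_sub_le (ρ • ξ) z
      rw [norm_smul, hξ, mul_one, Real.norm_eq_abs, abs_of_pos hρpos] at this
      exact this
    nlinarith
  -- separation
  set KK : Set X := closure (convexHull ℝ (Set.range (fun k => w (N k)))) with hKKdef
  have h0 : (0:X) ∉ KK := by
    intro h0mem
    have hsub : KK ⊆ {z : X | ε/2 ≤ ‖z‖} := by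
      apply closure_minimal
      · intro z hz
        exact hhull z hz
      · exact isClosed_le continuous_const continuous_norm
    have := hsub h0mem
    simp only [Set.mem_setOf_eq, norm_zero] at this
    linarith
  obtain ⟨f, u0, hf1, hf2⟩ :=
    geometric_hahn_banach_closed_point
      ((convex_convexHull ℝ _).closure) isClosed_closure h0
  have hu0 : u0 < 0 := by simpa using hf2
  have hfk : ∀ k, f (w (N k)) < u0 := fun k =>
    hf1 _ (subset_closure (subset_convexHull ℝ _ (Set.mem_range_self k)))
  have hNt : Tendsto (fun k => N k) atTop atTop :=
    tendsto_atTop_mono hNk tendsto_id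
  have hlim : Tendsto (fun k => f (w (N k))) atTop (nhds 0) := (hw f).comp hNt
  have hfin : (0:ℝ) ≤ u0 :=
    le_of_tendsto hlim (Filter.Eventually.of_forall (fun k => (hfk k).le))
  linarith
end

theorem stmt_13 {X : Type*} [NormedAddCommGroup X] [NormedSpace ℝ X] [CompleteSpace X]
    (hrefl : Function.Surjective (NormedSpace.inclusionInDoubleDual ℝ X))
    (S : Set X) (hS : Dense S) (T : S → S) (hbij : Function.Bijective T)
    (hT : ∀ u v : S, ⌊‖(u : X) - (v : X)‖⌋ = ⌊‖(T u : X) - (T v : X)‖⌋)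
    (x_ : ℕ → S) (x x' : X)
    (hconv : ∀ f : X →L[ℝ] ℝ,
      Filter.Tendsto (fun n => f (x_ n : X)) Filter.atTop (nhds (f x)))
    (hconv' : ∀ f : X →L[ℝ] ℝ,
      Filter.Tendsto (fun n => f (T (x_ n) : X)) Filter.atTop (nhds (f x'))) :
    ∀ y : S, ∀ m : ℕ, ‖x - (y : X)‖ < (m : ℝ) → ‖x' - (T y : X)‖ ≤ (m : ℝ) := by
  intro y m hxy
  by_contra hcon
  push_neg at hcon
  -- basic quantities
  obtain ⟨d, hddef⟩ : ∃ d : ℝ, d = ‖x' - (T y : X)‖ := ⟨_, rfl⟩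
  have hmd : (m : ℝ) < d := by rw [hddef]; exact hcon
  have hd0 : 0 < d := lt_of_le_of_lt (Nat.cast_nonneg m) hmd
  obtain ⟨γ, hγdef⟩ : ∃ γ : ℝ, γ = d - m := ⟨_, rfl⟩
  have hγ0 : 0 < γ := by rw [hγdef]; linarith
  have hγd : γ ≤ d := by rw [hγdef]; have := Nat.cast_nonneg (α := ℝ) m; linarith
  -- the weakly null sequence
  obtain ⟨w, hwdef⟩ : ∃ w : ℕ → X, w = fun n => (T (x_ n) : X) - x' := ⟨_, rfl⟩
  have hwnull : ∀ f : X →L[ℝ] ℝ, Tendsto (fun n => f (w n)) atTop (nhds 0) := by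
    intro f
    have h1 := (hconv' f).sub_const (f x')
    rw [sub_self] at h1
    have h2 : (fun n => f (T (x_ n) : X) - f x') = fun n => f (w n) := by
      funext n
      rw [hwdef, map_sub]
    rwa [h2] at h1
  obtain ⟨C, hC1, hwC⟩ := weak_null_bounded' w hwnull
  -- direction
  obtain ⟨ξ, hξdef⟩ : ∃ ξ : X, ξ = x' - (T y : X) := ⟨_, rfl⟩
  have hnξ : ‖ξ‖ = d := by rw [hξdef, hddef]
  obtain ⟨Z, hZdef⟩ : ∃ Z : X, Z = d⁻¹ • ξ := ⟨_, rfl⟩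
  have hnZ : ‖Z‖ = 1 := by
    rw [hZdef, norm_smul, Real.norm_eq_abs, abs_of_pos (by positivity), hnξ]
    field_simp
  have hdZ : d • Z = ξ := by rw [hZdef, smul_inv_smul₀ hd0.ne']
  -- parameters
  obtain ⟨ε, hεdef⟩ : ∃ ε : ℝ, ε = min (γ/8) 1 := ⟨_, rfl⟩
  have hε0 : 0 < ε := by rw [hεdef]; positivity
  have hε1 : ε ≤ 1 := by rw [hεdef]; exact min_le_right _ _
  have hεγ : ε ≤ γ/8 := by rw [hεdef]; exact min_le_left _ _
  obtain ⟨θ, hθdef⟩ : ∃ θ : ℝ, θ = min (γ/(8*d)) (1/2) := ⟨_, rfl⟩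
  have hθ0 : 0 < θ := by rw [hθdef]; positivity
  have hθ1 : θ ≤ 1 := by rw [hθdef]; have := min_le_right (γ/(8*d)) (1/2); linarith
  have hθhalf : θ ≤ 1/2 := by rw [hθdef]; exact min_le_right _ _
  have hθγ : d * θ ≤ γ/8 := by
    have h3 : θ ≤ γ/(8*d) := by rw [hθdef]; exact min_le_left _ _
    have h4 : d * θ ≤ d * (γ/(8*d)) := mul_le_mul_of_nonneg_left h3 hd0.le
    have h5 : d * (γ/(8*d)) = γ/8 := by field_simp
    linarith
  -- apply the core lemma
  obtain ⟨u, R, hR, hcone, hfreq⟩ :=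
    directional_absorption' w hwnull hC1 hwC Z hnZ hθ0 hθ1 hε0 hε1
  have hRZ : ‖R • Z‖ = R := by
    rw [norm_smul, Real.norm_eq_abs, abs_of_pos hR, hnZ, mul_one]
  have hu_low : R * (1 - θ) ≤ ‖u‖ := by
    have h6 : ‖R • Z‖ - ‖R • Z - u‖ ≤ ‖R • Z - (R • Z - u)‖ := norm_sub_norm_le _ _
    rw [show R • Z - (R • Z - u) = u by abel] at h6
    rw [norm_sub_rev, hRZ] at h6
    nlinarith [hcone]
  have hu0 : 0 < ‖u‖ := by nlinarith [hu_low, hR, hθhalf]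
  obtain ⟨g, hg1, hgu'⟩ := exists_dual_vector ℝ u
    (by intro h; rw [h] at hu0; exact lt_irrefl _ hu0)
  have hgu : g u = ‖u‖ := by exact_mod_cast hgu'
  have hple : ∀ z : X, g z ≤ ‖z‖ := by
    intro z
    have h11 := g.le_opNorm z
    rw [hg1, one_mul] at h11
    exact (le_abs_self _).trans (by rwa [← Real.norm_eq_abs])
  have hgZ : 1 - 2*θ ≤ g Z := by
    have h9 : g u - ‖u - R • Z‖ ≤ g (R • Z) := by
      have h10 : g u - g (R • Z) = g (u - R • Z) := by rw [map_sub]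
      have h11 := hple (u - R • Z)
      linarith
    rw [map_smul, smul_eq_mul, hgu] at h9
    have h12 : R * (1 - 2*θ) ≤ R * g Z := by nlinarith [hcone, hu_low]
    exact le_of_mul_le_mul_left h12 hR
  have hgξ : d - γ/4 ≤ g ξ := by
    have h13 : g ξ = d * g Z := by rw [← hdZ, map_smul, smul_eq_mul]
    nlinarith [hθγ, hd0, hgZ]
  -- scaling so that ‖u'‖ + ε + γ/4 is a positive integer
  obtain ⟨α, hαdef⟩ : ∃ α : ℝ, α = ε + γ/4 := ⟨_, rfl⟩
  have hα0 : 0 < α := by rw [hαdef]; positivity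
  obtain ⟨Mn, hMndef⟩ : ∃ Mn : ℕ, Mn = ⌈‖u‖ + α⌉₊ + 1 := ⟨_, rfl⟩
  have hMge : ‖u‖ + α + 1 ≤ (Mn:ℝ) := by
    rw [hMndef]
    push_cast
    have := Nat.le_ceil (‖u‖ + α)
    linarith
  obtain ⟨τ, hτdef⟩ : ∃ τ : ℝ, τ = ((Mn:ℝ) - α)/‖u‖ := ⟨_, rfl⟩
  have hτ1 : 1 ≤ τ := by
    rw [hτdef, le_div_iff₀ hu0]
    linarith
  have hτ0 : 0 < τ := lt_of_lt_of_le one_pos hτ1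
  obtain ⟨u', hu'def⟩ : ∃ u' : X, u' = τ • u := ⟨_, rfl⟩
  have hnu' : ‖u'‖ = (Mn:ℝ) - α := by
    rw [hu'def, norm_smul, Real.norm_eq_abs, abs_of_pos hτ0, hτdef]
    field_simp
  have hgain : ‖u'‖ + (d - γ/4) ≤ ‖u' + ξ‖ := by
    have h14 : g (u' + ξ) ≤ ‖u' + ξ‖ := hple _
    have h15 : g u' = ‖u'‖ := by
      rw [hu'def, map_smul, smul_eq_mul, hgu, norm_smul, Real.norm_eq_abs,
        abs_of_pos hτ0]
    have h16 : g (u' + ξ) = g u' + g ξ := by rw [map_add]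
    linarith [hgξ]
  have habs' : ∃ᶠ n in atTop, ‖u' - w n‖ < ‖u'‖ + ε := by
    refine hfreq.mono (fun n hn => ?_)
    have h17 : u' - w n = (u' - u) + (u - w n) := by abel
    have h18 : ‖u' - u‖ = (τ - 1) * ‖u‖ := by
      rw [hu'def, show τ • u - u = (τ - 1) • u by rw [sub_smul, one_smul]]
      rw [norm_smul, Real.norm_eq_abs, abs_of_nonneg (by linarith)]
    have h19 : ‖u'‖ = τ * ‖u‖ := by
      rw [hu'def, norm_smul, Real.norm_eq_abs, abs_of_pos hτ0]
    calc ‖u' - w n‖ ≤ ‖u' - u‖ + ‖u - w n‖ := by rw [h17]; exact norm_add_le _ _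
    _ < (τ - 1) * ‖u‖ + (‖u‖ + ε) := by rw [h18]; linarith
    _ = ‖u'‖ + ε := by rw [h19]; ring
  -- pick the point s in S
  obtain ⟨z₀, hz₀def⟩ : ∃ z₀ : X, z₀ = x' + u' := ⟨_, rfl⟩
  obtain ⟨s0, hs0S, hs0ball⟩ := hS.exists_mem_open Metric.isOpen_ball
    (⟨z₀, Metric.mem_ball_self (by positivity : (0:ℝ) < γ/8)⟩)
  have hs0close : ‖z₀ - s0‖ < γ/8 := by
    rw [Metric.mem_ball, dist_eq_norm] at hs0ball
    rw [norm_sub_rev]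
    exact hs0ball
  obtain ⟨tS, htS⟩ := hbij.2 ⟨s0, hs0S⟩
  have htSs : (T tS : X) = s0 := by rw [htS]
  -- frequently, x_ n is within Mn of tS
  have hfreq2 : ∃ᶠ n in atTop, ‖(x_ n : X) - (tS : X)‖ < (Mn:ℝ) := by
    refine habs'.mono (fun n hn => ?_)
    have hTn : ‖(T (x_ n) : X) - s0‖ < (Mn:ℝ) := by
      have e1 : (T (x_ n) : X) - s0 = (w n - u') + (z₀ - s0) := by
        simp only [hwdef, hz₀def]; abel
      calc ‖(T (x_ n) : X) - s0‖ ≤ ‖w n - u'‖ + ‖z₀ - s0‖ := by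
            rw [e1]; exact norm_add_le _ _
      _ < (‖u'‖ + ε) + γ/8 := by
          rw [norm_sub_rev]
          linarith [hn, hs0close]
      _ ≤ (Mn:ℝ) := by rw [hnu', hαdef]; linarith [hγ0]
    have hfl := hT (x_ n) tS
    rw [htSs] at hfl
    have h12 : ⌊‖(T (x_ n) : X) - s0‖⌋ < (Mn:ℤ) := by
      rw [Int.floor_lt]
      exact_mod_cast hTn
    rw [← hfl] at h12
    have h13 := Int.floor_lt.mp h12
    exact_mod_cast h13
  -- tS is far from y
  have hfar : ((m:ℝ) + Mn) ≤ ‖(tS : X) - (y : X)‖ := by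
    have h13 : ((m:ℝ) + Mn) ≤ ‖s0 - (T y : X)‖ := by
      have e2 : s0 - (T y : X) = (u' + ξ) - (z₀ - s0) := by
        rw [hz₀def, hξdef]; abel
      have h14 : ‖u' + ξ‖ - ‖z₀ - s0‖ ≤ ‖s0 - (T y : X)‖ := by
        rw [e2]; exact norm_sub_norm_le _ _
      have h15 : ‖u'‖ + (d - γ/4) - γ/8 ≤ ‖s0 - (T y : X)‖ := by
        linarith [hgain, hs0close]
      rw [hnu', hαdef] at h15
      have hγm : d = (m:ℝ) + γ := by rw [hγdef]; ring
      rw [hγm] at h15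
      linarith [hεγ]
    have h16 : ((m:ℝ) + Mn) = (((m + Mn : ℕ) : ℤ) : ℝ) := by push_cast; ring
    have h17 : ((m + Mn : ℕ) : ℤ) ≤ ⌊‖s0 - (T y : X)‖⌋ := by
      rw [Int.le_floor]
      rw [h16] at h13
      exact h13
    have hfl2 := hT tS y
    rw [htSs] at hfl2
    rw [← hfl2] at h17
    calc ((m:ℝ) + Mn) = (((m + Mn : ℕ) : ℤ) : ℝ) := h16
    _ ≤ ⌊‖(tS : X) - (y : X)‖⌋ := by exact_mod_cast h17
    _ ≤ ‖(tS : X) - (y : X)‖ := Int.floor_le _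
  -- weak lower semicontinuity
  have hLSC : ‖x - (tS : X)‖ ≤ (Mn:ℝ) := by
    apply NormedSpace.norm_le_dual_bound ℝ _ (Nat.cast_nonneg _)
    intro f
    have hlim : Tendsto (fun n => f ((x_ n : X) - (tS : X))) atTop
        (nhds (f (x - (tS : X)))) := by
      have h18 := (hconv f).sub_const (f (tS : X))
      have h19 : (fun n => f (x_ n : X) - f (tS : X)) =
          fun n => f ((x_ n : X) - (tS : X)) := by
        funext n; rw [map_sub]
      rw [h19] at h18
      rw [map_sub]
      exact h18
    by_contra hgt
    push_neg at hgt
    have hev : ∀ᶠ n in atTop, (Mn:ℝ) * ‖f‖ < ‖f ((x_ n : X) - (tS : X))‖ :=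
      hlim.norm.eventually_const_lt hgt
    obtain ⟨n, hn1, hn2⟩ := (hfreq2.and_eventually hev).exists
    have h20 : ‖f ((x_ n : X) - (tS : X))‖ ≤ ‖f‖ * ‖(x_ n : X) - (tS : X)‖ :=
      f.le_opNorm _
    nlinarith [norm_nonneg f]
  -- final contradiction
  have htri : ‖(tS : X) - (y : X)‖ ≤ ‖x - (tS : X)‖ + ‖x - (y : X)‖ := by
    have e3 : (tS : X) - (y : X) = -(x - (tS : X)) + (x - (y : X)) := by abel
    rw [e3]
    exact (norm_add_le _ _).trans (by rw [norm_neg])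
  linarith [hfar, hLSC, htri, hxy]
end

section
/- Let X be a Banach space of dimension at least 2 such that the extreme points of its closed unit ball are dense in the unit sphere. Then the additive subgroup Λ = { Σᵢ λᵢ xᵢ : λᵢ ∈ ℤ, xᵢ extreme points of the unit ball } is dense in X. If moreover X is strictly convex, then Λ = X. -/
open Metric Set

private lemma sum_two_units {X : Type*} [NormedAddCommGroup X] [NormedSpace ℝ X]
    (hdim : 2 ≤ Module.rank ℝ X) (x : X) (hx : ‖x‖ ≤ 2) :
    ∃ u v : X, ‖u‖ = 1 ∧ ‖v‖ = 1 ∧ u + v = x := by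
  have h1 : (1 : Cardinal) < Module.rank ℝ X := lt_of_lt_of_le (by norm_num) hdim
  have : Nontrivial X := by
    rw [← rank_pos_iff_nontrivial (R := ℝ)]; exact lt_trans one_pos h1 |>.trans_le le_rfl
  rcases eq_or_ne x 0 with rfl | hx0
  · obtain ⟨u, hu⟩ := NormedSpace.sphere_nonempty (E := X) (x := 0) (r := 1) |>.2 one_pos.le
    exact ⟨u, -u, by simpa using hu, by simpa using hu, by abel⟩
  · have hxn : 0 < ‖x‖ := norm_pos_iff.2 hx0
    set u₀ : X := ‖x‖⁻¹ • x with hu₀def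
    have hu₀ : u₀ ∈ sphere (0 : X) 1 := by
      simp [hu₀def, norm_smul, abs_of_pos (inv_pos.2 hxn), inv_mul_cancel₀ hxn.ne']
    have hmu₀ : -u₀ ∈ sphere (0 : X) 1 := by simpa using hu₀
    have hconn := (isConnected_sphere h1 (0 : X) one_pos.le).isPreconnected
    have hcont : ContinuousOn (fun u : X => ‖x - u‖) (sphere (0:X) 1) :=
      (continuous_const.sub continuous_id).norm.continuousOn
    have hfa : ‖x - u₀‖ = |‖x‖ - 1| := by
      have : x - u₀ = (1 - ‖x‖⁻¹) • x := by
        simp [hu₀def, sub_smul, one_smul]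
      rw [this, norm_smul, Real.norm_eq_abs]
      rw [abs_sub_comm, show |‖x‖⁻¹ - 1| = |(1 - ‖x‖) / ‖x‖| by
        rw [sub_div, div_self hxn.ne', one_div], abs_div, abs_of_pos hxn,
        div_mul_cancel₀ _ hxn.ne', abs_sub_comm]
    have hfb : ‖x - -u₀‖ = ‖x‖ + 1 := by
      have : x - -u₀ = (1 + ‖x‖⁻¹) • x := by simp [hu₀def, add_smul, one_smul]
      rw [this, norm_smul, Real.norm_eq_abs, abs_of_pos (by positivity), add_mul, one_mul,
        inv_mul_cancel₀ hxn.ne', add_comm]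
    have hmem : (1:ℝ) ∈ Icc ‖x - u₀‖ ‖x - -u₀‖ := by
      constructor
      · rw [hfa, abs_le]; constructor <;> linarith
      · rw [hfb]; linarith
    obtain ⟨u, hu, hu1⟩ := hconn.intermediate_value hu₀ hmu₀ hcont hmem
    exact ⟨u, x - u, by simpa using hu, hu1, by abel⟩

private lemma subgroup_top {X : Type*} [NormedAddCommGroup X] [NormedSpace ℝ X]
    (hdim : 2 ≤ Module.rank ℝ X) (G : AddSubgroup X)
    (hG : Metric.sphere (0 : X) 1 ⊆ (G : Set X)) : G = ⊤ := by
  rw [AddSubgroup.eq_top_iff']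
  intro x
  obtain ⟨n, hn⟩ : ∃ n : ℕ, ‖x‖ ≤ 2 * (n + 1) := by
    obtain ⟨n, hn⟩ := exists_nat_ge ‖x‖
    exact ⟨n, by linarith⟩
  set m : ℕ := n + 1
  have hm : (0:ℝ) < m := by positivity
  have hy : ‖((m:ℝ))⁻¹ • x‖ ≤ 2 := by
    rw [norm_smul, Real.norm_eq_abs, abs_of_pos (inv_pos.2 hm)]
    rw [inv_mul_le_iff₀ hm]
    have hmn : (m:ℝ) = (n:ℝ)+1 := by push_cast [m]; ring
    linarith
  obtain ⟨u, v, hu, hv, huv⟩ := sum_two_units hdim _ hy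
  have hx : x = m • u + m • v := by
    have : (m:ℝ) • (((m:ℝ))⁻¹ • x) = (m:ℝ) • (u + v) := by rw [huv]
    rw [smul_inv_smul₀ hm.ne'] at this
    rw [this, smul_add]; simp [Nat.cast_smul_eq_nsmul]
  rw [hx]
  exact G.add_mem (G.nsmul_mem (hG (by simpa using hu)) m) (G.nsmul_mem (hG (by simpa using hv)) m)

theorem stmt_17 {X : Type*} [NormedAddCommGroup X] [NormedSpace ℝ X] [CompleteSpace X]
    (hdim : 2 ≤ Module.rank ℝ X)
    (hext : Metric.sphere (0 : X) 1 ⊆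
      closure ((Metric.closedBall (0 : X) 1).extremePoints ℝ)) :
    Dense ((AddSubgroup.closure ((Metric.closedBall (0 : X) 1).extremePoints ℝ) :
        AddSubgroup X) : Set X) ∧
      (StrictConvexSpace ℝ X →
        AddSubgroup.closure ((Metric.closedBall (0 : X) 1).extremePoints ℝ) = ⊤) := by
  set E := (Metric.closedBall (0 : X) 1).extremePoints ℝ with hE
  set Λ := AddSubgroup.closure E with hΛ
  constructor
  · -- dense part
    set G := Λ.topologicalClosure with hG
    have hEG : E ⊆ (G : Set X) :=
      (AddSubgroup.subset_closure).trans (Λ.le_topologicalClosure)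
    have hsub : Metric.sphere (0 : X) 1 ⊆ (G : Set X) := by
      refine hext.trans ?_
      exact closure_minimal hEG Λ.isClosed_topologicalClosure
    have htop : G = ⊤ := subgroup_top hdim G hsub
    have : closure ((Λ : Set X)) = Set.univ := by
      have := congrArg (fun H : AddSubgroup X => (H : Set X)) htop
      simpa [hG, AddSubgroup.topologicalClosure_coe] using this
    rw [dense_iff_closure_eq, this]
  · -- strictly convex part
    intro hsc
    have hsphere : Metric.sphere (0 : X) 1 ⊆ E := by
      intro x hx
      have hx1 : ‖x‖ = 1 := by simpa using hx
      refine ⟨by simp [mem_closedBall, hx1.le, dist_eq_norm], ?_⟩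
      intro x₁ hx₁ x₂ hx₂ hxseg
      by_contra hne
      rcases eq_or_ne x₁ x₂ with heq | hne12
      · subst heq
        rw [openSegment_same] at hxseg
        exact hne (by simp [hxseg.symm])
      · obtain ⟨a, b, ha, hb, hab, habx⟩ := hxseg
        have := norm_combo_lt_of_ne (by simpa [mem_closedBall, dist_eq_norm] using hx₁)
          (by simpa [mem_closedBall, dist_eq_norm] using hx₂) hne12 ha hb hab
        rw [habx] at this
        exact absurd hx1 (ne_of_lt this)
    refine subgroup_top hdim Λ (hsphere.trans AddSubgroup.subset_closure)
end
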